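/- arXiv:1410.7902 — 5 statements merged into one kernel-verified Lean document; each statement's English description precedes it below -/
import Mathlib

section
/- Let X and Y be Banach spaces, D ⊆ X a nonempty open connected set, f : D → Y a local homeomorphism, x₀ ∈ D, and let (D_Φ, Φ) be the maximal auxiliary flow for f at x₀. Then f is a homeomorphism of D onto Y if and only if D_Φ = D × ℝ, i.e. if and only if Φ is a global dynamical system on D. -/
open Set Filter

/-- `f : D → Y` is a local homeomorphism on the open set `D` if every point of `D` has an
open neighbourhood `U ⊆ D` such that `f(U)` is open and `f|U : U → f(U)` is a
homeomorphism. -/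
def IsLocalHomeoOn {X Y : Type*} [TopologicalSpace X] [TopologicalSpace Y]
    (f : X → Y) (D : Set X) : Prop :=
  ∀ x ∈ D, ∃ U : Set X, U ⊆ D ∧ IsOpen U ∧ x ∈ U ∧ IsOpen (f '' U) ∧
    ContinuousOn f U ∧ ∃ g : Y → X, ContinuousOn g (f '' U) ∧
      (∀ u ∈ U, g (f u) = u) ∧ ∀ y ∈ f '' U, g y ∈ U ∧ f (g y) = y

/-- The maximal auxiliary flow `Φ : D_Φ → D` for a map `f : D → Y` at the point `x₀`:
`D_Φ ⊆ D × ℝ` is open, each section `I_x = {t : (x,t) ∈ D_Φ}` is an interval containing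
`0`, `Φ(x,0) = x`, the flow law `Φ(Φ(x,t₁),t₂) = Φ(x,t₁+t₂)` holds,
`f(Φ(x,t)) = f(x₀) + e^{-t}(f(x) - f(x₀))` on `D_Φ`, and `Φ` is maximal among such
liftings. -/
structure AuxFlow {X Y : Type*} [NormedAddCommGroup X] [NormedSpace ℝ X]
    [NormedAddCommGroup Y] [NormedSpace ℝ Y]
    (D : Set X) (f : X → Y) (x₀ : X) where
  dom : Set (X × ℝ)
  flow : X → ℝ → X
  isOpen_dom : IsOpen dom
  dom_subset : ∀ p ∈ dom, p.1 ∈ D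
  zero_mem : ∀ x ∈ D, (x, (0 : ℝ)) ∈ dom
  interval : ∀ x ∈ D, Set.OrdConnected {t : ℝ | (x, t) ∈ dom}
  mem_of_dom : ∀ p ∈ dom, flow p.1 p.2 ∈ D
  continuousOn : ContinuousOn (fun p : X × ℝ => flow p.1 p.2) dom
  flow_zero : ∀ x ∈ D, flow x 0 = x
  flow_add : ∀ (x : X) (t₁ t₂ : ℝ), (x, t₁) ∈ dom → (x, t₁ + t₂) ∈ dom →
    (flow x t₁, t₂) ∈ dom ∧ flow (flow x t₁) t₂ = flow x (t₁ + t₂)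
  lifts : ∀ p ∈ dom, f (flow p.1 p.2) = f x₀ + Real.exp (-p.2) • (f p.1 - f x₀)
  maximal : ∀ x ∈ D, ∀ J : Set ℝ, J.OrdConnected → (0 : ℝ) ∈ J →
    ∀ ψ : ℝ → X, ContinuousOn ψ J → ψ 0 = x →
    (∀ t ∈ J, ψ t ∈ D ∧ f (ψ t) = f x₀ + Real.exp (-t) • (f x - f x₀)) →
    ∀ t ∈ J, (x, t) ∈ dom ∧ ψ t = flow x t

private lemma exists_exp_mul_lt (c : ℝ) {ε : ℝ} (hε : 0 < ε) :
    ∃ s : ℝ, Real.exp (-s) * c < ε := by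
  have h := Real.tendsto_exp_neg_atTop_nhds_zero.mul_const c
  rw [zero_mul] at h
  exact (h.eventually (gt_mem_nhds hε)).exists

private lemma isLocalHomeoOn_continuousOn {X Y : Type*} [TopologicalSpace X]
    [TopologicalSpace Y] {f : X → Y} {D : Set X} (hf : IsLocalHomeoOn f D) :
    ContinuousOn f D := by
  intro x hx
  obtain ⟨U, hUD, hUopen, hxU, _, hfU, _⟩ := hf x hx
  exact (hfU.continuousAt (hUopen.mem_nhds hxU)).continuousWithinAt

private lemma isLocalHomeoOn_isOpenMap {X Y : Type*} [TopologicalSpace X]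
    [TopologicalSpace Y] {f : X → Y} {D : Set X} (hf : IsLocalHomeoOn f D)
    {S : Set X} (hS : IsOpen S) (hSD : S ⊆ D) : IsOpen (f '' S) := by
  rw [isOpen_iff_forall_mem_open]
  rintro y ⟨x, hxS, rfl⟩
  obtain ⟨U, hUD, hUopen, hxU, hfUopen, hfU, g, hg, hgf, hfg⟩ := hf x (hSD hxS)
  refine ⟨f '' (S ∩ U), image_mono inter_subset_left, ?_, ⟨x, ⟨hxS, hxU⟩, rfl⟩⟩
  have heq : f '' (S ∩ U) = f '' U ∩ g ⁻¹' (S ∩ U) := by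
    ext z
    constructor
    · rintro ⟨u, hu, rfl⟩
      exact ⟨⟨u, hu.2, rfl⟩, by rw [mem_preimage, hgf u hu.2]; exact hu⟩
    · rintro ⟨hzU, hzg⟩
      exact ⟨g z, hzg, (hfg z hzU).2⟩
  rw [heq]
  exact hg.isOpen_inter_preimage hfUopen (hS.inter hUopen)

open Topology in
set_option maxHeartbeats 1000000 in
/-- `f` is a homeomorphism of `D` onto `Y` if and only if the maximal auxiliary flow is
a global dynamical system, i.e. `D_Φ = D × ℝ`. -/
theorem homeomorph_iff_global_flow {X Y : Type*}
    [NormedAddCommGroup X] [NormedSpace ℝ X] [CompleteSpace X]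
    [NormedAddCommGroup Y] [NormedSpace ℝ Y] [CompleteSpace Y]
    (D : Set X) (hDopen : IsOpen D) (hDne : D.Nonempty) (hDconn : IsConnected D)
    (f : X → Y) (hf : IsLocalHomeoOn f D) (x₀ : X) (hx₀ : x₀ ∈ D)
    (F : AuxFlow D f x₀) :
    (∃ h : D ≃ₜ Y, ∀ x : D, h x = f x.1) ↔ F.dom = D ×ˢ (Set.univ : Set ℝ) := by
  constructor
  · -- forward direction
    rintro ⟨h, hh⟩
    apply Set.Subset.antisymm
    · intro p hp
      exact ⟨F.dom_subset p hp, trivial⟩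
    · rintro ⟨x, t⟩ ⟨hx, -⟩
      have hψval : ∀ s : ℝ,
          (↑(h.symm (f x₀ + Real.exp (-s) • (f x - f x₀))) : X)
            = (h.symm (f x₀ + Real.exp (-s) • (f x - f x₀)) : D).1 := fun _ => rfl
      set ψ : ℝ → X :=
        fun s => (h.symm (f x₀ + Real.exp (-s) • (f x - f x₀)) : D).1 with hψdef
      have hcont : Continuous ψ := by
        apply continuous_subtype_val.comp
        apply h.symm.continuous.comp
        exact continuous_const.add
          ((Real.continuous_exp.comp continuous_neg).smul continuous_const)
      have hfψ : ∀ s : ℝ, f (ψ s) = f x₀ + Real.exp (-s) • (f x - f x₀) := by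
        intro s
        have := hh (h.symm (f x₀ + Real.exp (-s) • (f x - f x₀)))
        rw [h.apply_symm_apply] at this
        exact this.symm
      have hψ0 : ψ 0 = x := by
        have h1 : f x₀ + Real.exp (-(0:ℝ)) • (f x - f x₀) = h ⟨x, hx⟩ := by
          rw [hh ⟨x, hx⟩, neg_zero, Real.exp_zero, one_smul]; abel
        show (h.symm (f x₀ + Real.exp (-(0:ℝ)) • (f x - f x₀)) : D).1 = x
        rw [h1, h.symm_apply_apply]
      exact (F.maximal x hx univ ordConnected_univ (mem_univ _) ψ hcont.continuousOn hψ0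
        (fun s _ => ⟨(h.symm _).2, hfψ s⟩) t (mem_univ t)).1
  · -- backward direction
    intro hdom
    have hfD : ContinuousOn f D := isLocalHomeoOn_continuousOn hf
    obtain ⟨U, hUD, hUopen, hx₀U, hfUopen, hfU, g, hg, hgf, hfg⟩ := hf x₀ hx₀
    obtain ⟨ε, hε, hB⟩ := Metric.isOpen_iff.mp hfUopen (f x₀) ⟨x₀, hx₀U, rfl⟩
    have hmemdom : ∀ x ∈ D, ∀ t : ℝ, (x, t) ∈ F.dom := fun x hx t => by
      rw [hdom]; exact ⟨hx, trivial⟩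
    have hflowD : ∀ x ∈ D, ∀ t : ℝ, F.flow x t ∈ D := fun x hx t =>
      F.mem_of_dom (x, t) (hmemdom x hx t)
    have hlift : ∀ x ∈ D, ∀ t : ℝ,
        f (F.flow x t) = f x₀ + Real.exp (-t) • (f x - f x₀) :=
      fun x hx t => F.lifts (x, t) (hmemdom x hx t)
    have hnorm : ∀ x ∈ D, ∀ t : ℝ,
        ‖f (F.flow x t) - f x₀‖ = Real.exp (-t) * ‖f x - f x₀‖ := by
      intro x hx t
      rw [hlift x hx t, add_sub_cancel_left, norm_smul, Real.norm_eq_abs,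
        abs_of_pos (Real.exp_pos _)]
    -- key lemma: if the flow of x is at some time inside U over the ball, then for every
    -- time s for which the ray point is in the ball, the flow is given by g of the ray.
    have key : ∀ x ∈ D, ∀ T : ℝ, F.flow x T ∈ U →
        Real.exp (-T) * ‖f x - f x₀‖ < ε →
        ∀ s : ℝ, Real.exp (-s) * ‖f x - f x₀‖ < ε →
        F.flow x s = g (f x₀ + Real.exp (-s) • (f x - f x₀)) ∧ F.flow x s ∈ U := by
      intro x hx T hTU hTε s hsε
      have hx''D : F.flow x T ∈ D := hflowD x hx T
      have hfx''sub : f (F.flow x T) - f x₀ = Real.exp (-T) • (f x - f x₀) := by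
        rw [hlift x hx T]; abel
      set J : Set ℝ := {u : ℝ | Real.exp (-(T + u)) * ‖f x - f x₀‖ < ε} with hJ
      have hJord : J.OrdConnected := by
        constructor
        rintro u₁ hu₁ u₂ hu₂ u ⟨h1, h2⟩
        have : Real.exp (-(T + u)) ≤ Real.exp (-(T + u₁)) :=
          Real.exp_le_exp.mpr (by linarith)
        exact lt_of_le_of_lt
          (mul_le_mul_of_nonneg_right this (norm_nonneg _)) hu₁
      have h0J : (0 : ℝ) ∈ J := by
        simp only [hJ, mem_setOf_eq, add_zero]
        exact hTε
      have hsmul : ∀ u : ℝ,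
          Real.exp (-u) • (f (F.flow x T) - f x₀)
            = Real.exp (-(T + u)) • (f x - f x₀) := by
        intro u
        rw [hfx''sub, smul_smul, ← Real.exp_add]
        congr 2
        ring
      set χ : ℝ → X := fun u => g (f x₀ + Real.exp (-(T + u)) • (f x - f x₀)) with hχ
      have hyuB : ∀ u ∈ J,
          f x₀ + Real.exp (-(T + u)) • (f x - f x₀) ∈ Metric.ball (f x₀) ε := by
        intro u hu
        rw [Metric.mem_ball, dist_eq_norm, add_sub_cancel_left, norm_smul,
          Real.norm_eq_abs, abs_of_pos (Real.exp_pos _)]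
        exact hu
      have hχD : ∀ u ∈ J, χ u ∈ U ∧ f (χ u) = f x₀ + Real.exp (-(T + u)) • (f x - f x₀) :=
        fun u hu => hfg _ (hB (hyuB u hu))
      have hχcont : ContinuousOn χ J := by
        apply hg.comp
        · exact (continuous_const.add
            (((Real.continuous_exp.comp (continuous_neg.comp
              (continuous_const.add continuous_id))).smul continuous_const))).continuousOn
        · exact fun u hu => hB (hyuB u hu)
      have hχ0 : χ 0 = F.flow x T := by
        rw [hχ]
        simp only [add_zero]
        rw [show f x₀ + Real.exp (-T) • (f x - f x₀) = f (F.flow x T) from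
          (hlift x hx T).symm]
        exact hgf _ hTU
      have hmax := F.maximal (F.flow x T) hx''D J hJord h0J χ hχcont hχ0
        (fun u hu => ⟨hUD (hχD u hu).1, by rw [(hχD u hu).2, hsmul u]⟩)
      -- now specialize at u = s - T
      have huJ : s - T ∈ J := by
        have : T + (s - T) = s := by ring
        rw [hJ, mem_setOf_eq, this]
        exact hsε
      have h1 := (hmax (s - T) huJ).2
      have h2 := (F.flow_add x T (s - T) (hmemdom x hx T) (hmemdom x hx (T + (s - T)))).2
      have h3 : T + (s - T) = s := by ring
      rw [h3] at h2
      have h4 : F.flow x s = χ (s - T) := by rw [← h2, ← h1]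
      constructor
      · rw [h4]
        simp only [hχ]
        rw [h3]
      · rw [h4]
        exact (hχD (s - T) huJ).1
    -- the set A
    set A : Set X := ⋃ T : ℝ, ((D ∩ (fun x => F.flow x T) ⁻¹' U) ∩
      (fun x => f (F.flow x T)) ⁻¹' Metric.ball (f x₀) ε) with hA
    have hφcont : ∀ T : ℝ, ContinuousOn (fun x => F.flow x T) D := by
      intro T x hx
      have h1 : ContinuousAt (fun p : X × ℝ => F.flow p.1 p.2) (x, T) :=
        F.continuousOn.continuousAt (F.isOpen_dom.mem_nhds (hmemdom x hx T))
      have h2 : ContinuousAt (fun x' : X => (x', T)) x :=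
        continuousAt_id.prodMk continuousAt_const
      have h3 := ContinuousAt.comp (f := fun x' : X => (x', T)) h1 h2
      exact h3.continuousWithinAt
    have hAmem : ∀ x, x ∈ A ↔
        ∃ T : ℝ, x ∈ D ∧ F.flow x T ∈ U ∧ Real.exp (-T) * ‖f x - f x₀‖ < ε := by
      intro x
      rw [hA, mem_iUnion]
      constructor
      · rintro ⟨T, ⟨⟨hxD, hxU⟩, hxB⟩⟩
        refine ⟨T, hxD, hxU, ?_⟩
        rw [← hnorm x hxD T]
        rw [mem_preimage, Metric.mem_ball, dist_eq_norm] at hxB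
        exact hxB
      · rintro ⟨T, hxD, hxU, hxε⟩
        exact ⟨T, ⟨⟨hxD, hxU⟩, by
          rw [mem_preimage, Metric.mem_ball, dist_eq_norm, hnorm x hxD T]; exact hxε⟩⟩
    have hAopen : IsOpen A := by
      rw [hA]
      apply isOpen_iUnion
      intro T
      have hO1 : IsOpen (D ∩ (fun x => F.flow x T) ⁻¹' U) :=
        (hφcont T).isOpen_inter_preimage hDopen hUopen
      have h2 : ContinuousOn (fun x => f (F.flow x T)) (D ∩ (fun x => F.flow x T) ⁻¹' U) :=
        hfD.comp ((hφcont T).mono inter_subset_left) (fun x hx => hflowD x hx.1 T)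
      exact h2.isOpen_inter_preimage hO1 Metric.isOpen_ball
    have hx₀A : x₀ ∈ A := by
      refine (hAmem x₀).mpr ⟨0, hx₀, ?_, ?_⟩
      · rw [F.flow_zero x₀ hx₀]; exact hx₀U
      · rw [sub_self, norm_zero, mul_zero]; exact hε
    have hAclosed : closure A ∩ D ⊆ A := by
      rintro x ⟨hxcl, hxD⟩
      obtain ⟨s, hs⟩ := exists_exp_mul_lt ‖f x - f x₀‖ hε
      have hy₀B : f x₀ + Real.exp (-s) • (f x - f x₀) ∈ Metric.ball (f x₀) ε := by
        rw [Metric.mem_ball, dist_eq_norm, add_sub_cancel_left, norm_smul,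
          Real.norm_eq_abs, abs_of_pos (Real.exp_pos _)]
        exact hs
      have hL : (𝓝[A] x).NeBot := mem_closure_iff_nhdsWithin_neBot.mp hxcl
      have htf : Tendsto f (𝓝[A] x) (𝓝 (f x)) :=
        ((hfD.continuousAt (hDopen.mem_nhds hxD)).tendsto).mono_left nhdsWithin_le_nhds
      have htq : Tendsto (fun a => f x₀ + Real.exp (-s) • (f a - f x₀)) (𝓝[A] x)
          (𝓝 (f x₀ + Real.exp (-s) • (f x - f x₀))) :=
        tendsto_const_nhds.add ((htf.sub tendsto_const_nhds).const_smul _)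
      have h2 : ∀ᶠ a in 𝓝[A] x,
          (f x₀ + Real.exp (-s) • (f a - f x₀)) ∈ Metric.ball (f x₀) ε :=
        htq (Metric.isOpen_ball.mem_nhds hy₀B)
      have hev : ∀ᶠ a in 𝓝[A] x,
          F.flow a s = g (f x₀ + Real.exp (-s) • (f a - f x₀)) ∧ F.flow a s ∈ U := by
        filter_upwards [self_mem_nhdsWithin, h2] with a haA haB
        obtain ⟨T, haD, haU, haε⟩ := (hAmem a).mp haA
        have haε' : Real.exp (-s) * ‖f a - f x₀‖ < ε := by
          rw [Metric.mem_ball, dist_eq_norm, add_sub_cancel_left, norm_smul,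
            Real.norm_eq_abs, abs_of_pos (Real.exp_pos _)] at haB
          exact haB
        exact key a haD T haU haε s haε'
      have ht1 : Tendsto (fun a => F.flow a s) (𝓝[A] x) (𝓝 (F.flow x s)) := by
        have h1 : ContinuousAt (fun p : X × ℝ => F.flow p.1 p.2) (x, s) :=
          F.continuousOn.continuousAt (F.isOpen_dom.mem_nhds (hmemdom x hxD s))
        have h2 : ContinuousAt (fun a : X => (a, s)) x :=
          continuousAt_id.prodMk continuousAt_const
        have h3 := ContinuousAt.comp (f := fun a : X => (a, s)) h1 h2
        exact (h3.tendsto).mono_left nhdsWithin_le_nhds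
      have ht2 : Tendsto (fun a => g (f x₀ + Real.exp (-s) • (f a - f x₀))) (𝓝[A] x)
          (𝓝 (g (f x₀ + Real.exp (-s) • (f x - f x₀)))) := by
        have hgw : ContinuousWithinAt g (f '' U) (f x₀ + Real.exp (-s) • (f x - f x₀)) :=
          hg _ (hB hy₀B)
        apply hgw.tendsto.comp
        rw [tendsto_nhdsWithin_iff]
        exact ⟨htq, h2.mono fun a ha => hB ha⟩
      have heq : F.flow x s = g (f x₀ + Real.exp (-s) • (f x - f x₀)) :=
        tendsto_nhds_unique ht1 (ht2.congr' (hev.mono fun a h => h.1.symm))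
      refine (hAmem x).mpr ⟨s, hxD, ?_, hs⟩
      rw [heq]
      exact (hfg _ (hB hy₀B)).1
    have hAD : D ⊆ A :=
      hDconn.isPreconnected.subset_of_closure_inter_subset hAopen ⟨x₀, hx₀, hx₀A⟩ hAclosed
    -- injectivity
    have hinj : ∀ a ∈ D, ∀ b ∈ D, f a = f b → a = b := by
      intro a ha b hb hab
      obtain ⟨s, hs⟩ := exists_exp_mul_lt ‖f a - f x₀‖ hε
      obtain ⟨Ta, haD, haU, haε⟩ := (hAmem a).mp (hAD ha)
      obtain ⟨Tb, hbD, hbU, hbε⟩ := (hAmem b).mp (hAD hb)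
      have h1 := key a ha Ta haU haε s hs
      have h2 := key b hb Tb hbU hbε s (by rwa [← hab])
      have hflow : F.flow a s = F.flow b s := by rw [h1.1, h2.1, hab]
      have hzero : s + -s = 0 := by ring
      have ha' := (F.flow_add a s (-s) (hmemdom a ha s) (hmemdom a ha (s + -s))).2
      have hb' := (F.flow_add b s (-s) (hmemdom b hb s) (hmemdom b hb (s + -s))).2
      rw [hzero, F.flow_zero a ha] at ha'
      rw [hzero, F.flow_zero b hb] at hb'
      rw [← ha', ← hb', hflow]
    -- surjectivity
    have hsurj : ∀ y : Y, ∃ x ∈ D, f x = y := by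
      intro y
      obtain ⟨t, ht⟩ := exists_exp_mul_lt ‖y - f x₀‖ hε
      have hwB : f x₀ + Real.exp (-t) • (y - f x₀) ∈ Metric.ball (f x₀) ε := by
        rw [Metric.mem_ball, dist_eq_norm, add_sub_cancel_left, norm_smul,
          Real.norm_eq_abs, abs_of_pos (Real.exp_pos _)]
        exact ht
      have hgw := hfg _ (hB hwB)
      have hx₁D : g (f x₀ + Real.exp (-t) • (y - f x₀)) ∈ D := hUD hgw.1
      refine ⟨F.flow (g (f x₀ + Real.exp (-t) • (y - f x₀))) (-t),
        hflowD _ hx₁D (-t), ?_⟩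
      rw [hlift _ hx₁D (-t), hgw.2, neg_neg, add_sub_cancel_left, smul_smul,
        ← Real.exp_add, add_neg_cancel, Real.exp_zero, one_smul]
      abel
    -- build the homeomorphism
    have hbij : Function.Bijective (fun x : D => f x.1) := by
      constructor
      · rintro ⟨a, ha⟩ ⟨b, hb⟩ hab
        exact Subtype.ext (hinj a ha b hb hab)
      · intro y
        obtain ⟨x, hx, hfx⟩ := hsurj y
        exact ⟨⟨x, hx⟩, hfx⟩
    have hcont : Continuous (fun x : D => f x.1) :=
      continuousOn_iff_continuous_restrict.mp hfD
    have hopen : IsOpenMap (fun x : D => f x.1) := by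
      intro O hO
      rw [isOpen_induced_iff] at hO
      obtain ⟨W, hW, rfl⟩ := hO
      have himg : (fun x : D => f x.1) '' (Subtype.val ⁻¹' W) = f '' (W ∩ D) := by
        ext y
        constructor
        · rintro ⟨⟨a, ha⟩, haW, rfl⟩
          exact ⟨a, ⟨haW, ha⟩, rfl⟩
        · rintro ⟨a, ⟨haW, haD⟩, rfl⟩
          exact ⟨⟨a, haD⟩, haW, rfl⟩
      rw [himg]
      exact isLocalHomeoOn_isOpenMap hf (hW.inter hDopen) inter_subset_right
    exact ⟨Equiv.toHomeomorphOfContinuousOpen (Equiv.ofBijective _ hbij) hcont hopen,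
      fun x => rfl⟩
end

section
/- Let X and Y be Banach spaces, D ⊆ X a nonempty open connected set, f : D → Y a local homeomorphism, x₀ ∈ D, y₀ = f(x₀), let (D_Φ, Φ) be the maximal auxiliary flow for f at x₀, and let 𝒜 be the attraction basin of x₀, 𝒜 = {x ∈ D : [0,∞) ⊆ I_x and Φ(x,t) → x₀ as t → +∞}. Then: (i) f(∂𝒜) ⊆ ∂f(𝒜), where ∂𝒜 is the boundary of 𝒜 in D; (ii) both 𝒜 and ∂𝒜 are invariant under Φ (if x lies in the set and (x,t) ∈ D_Φ then Φ(x,t) lies in the set); and (iii) for every x ∈ ∂𝒜 the forward trajectory through x is not global: sup I_x < +∞. -/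
open Set Filter

/-- The attraction basin of `x₀`: the set of points of `D` whose forward trajectory is
defined for all `t ≥ 0` and converges to `x₀` as `t → +∞`. -/
def AuxFlow.basin {X Y : Type*} [NormedAddCommGroup X] [NormedSpace ℝ X]
    [NormedAddCommGroup Y] [NormedSpace ℝ Y]
    {D : Set X} {f : X → Y} {x₀ : X} (F : AuxFlow D f x₀) : Set X :=
  {x ∈ D | (∀ t : ℝ, 0 ≤ t → (x, t) ∈ F.dom) ∧
    Filter.Tendsto (fun t : ℝ => F.flow x t) Filter.atTop (nhds x₀)}

set_option linter.unusedSectionVars false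

namespace AuxFlowAux

variable {X Y : Type*} [NormedAddCommGroup X] [NormedSpace ℝ X]
  [NormedAddCommGroup Y] [NormedSpace ℝ Y]
  {D : Set X} {f : X → Y} {x₀ : X}

lemma lifts' (F : AuxFlow D f x₀) {x : X} {t : ℝ} (h : (x, t) ∈ F.dom) :
    f (F.flow x t) = f x₀ + Real.exp (-t) • (f x - f x₀) := F.lifts (x, t) h

lemma memD' (F : AuxFlow D f x₀) {x : X} {t : ℝ} (h : (x, t) ∈ F.dom) :
    F.flow x t ∈ D := F.mem_of_dom (x, t) h

lemma flow_contAt (F : AuxFlow D f x₀) {x : X} {t : ℝ} (h : (x, t) ∈ F.dom) :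
    ContinuousAt (fun s => F.flow x s) t := by
  have h2 : Continuous (fun s : ℝ => ((x, s) : X × ℝ)) := by continuity
  exact (F.continuousOn.continuousAt (F.isOpen_dom.mem_nhds h)).comp h2.continuousAt

lemma flow_contAt_fst (F : AuxFlow D f x₀) {x : X} {t : ℝ} (h : (x, t) ∈ F.dom) :
    ContinuousAt (fun x' => F.flow x' t) x := by
  have h2 : Continuous (fun x' : X => ((x', t) : X × ℝ)) := by continuity
  have h3 : ContinuousAt (fun x' : X => ((x', t) : X × ℝ)) x := h2.continuousAt
  have h4 : Filter.Tendsto (fun x' : X => ((x', t) : X × ℝ)) (nhds x) (nhds (x, t)) := h3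
  have h5 := Filter.Tendsto.comp (F.continuousOn.continuousAt (F.isOpen_dom.mem_nhds h)) h4
  exact h5

lemma contAt_f (hf : IsLocalHomeoOn f D) {x : X} (hx : x ∈ D) : ContinuousAt f x := by
  obtain ⟨U, -, hUopen, hxU, -, hfC, -⟩ := hf x hx
  exact hfC.continuousAt (hUopen.mem_nhds hxU)

lemma x0_mem (F : AuxFlow D f x₀) (hx₀ : x₀ ∈ D) (t : ℝ) :
    (x₀, t) ∈ F.dom ∧ F.flow x₀ t = x₀ := by
  have h := F.maximal x₀ hx₀ univ ordConnected_univ (mem_univ 0)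
    (fun _ => x₀) continuousOn_const rfl
    (fun t _ => ⟨hx₀, by simp⟩) t (mem_univ t)
  exact ⟨h.1, h.2.symm⟩

lemma x0_basin (F : AuxFlow D f x₀) (hx₀ : x₀ ∈ D) : x₀ ∈ F.basin :=
  ⟨hx₀, fun t _ => (x0_mem F hx₀ t).1,
    Tendsto.congr (fun t => ((x0_mem F hx₀ t).2).symm) tendsto_const_nhds⟩

lemma fwd (F : AuxFlow D f x₀) {x : X} (hx : x ∈ F.basin) {t : ℝ}
    (ht : (x, t) ∈ F.dom) : F.flow x t ∈ F.basin := by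
  obtain ⟨hxD, hdom, htend⟩ := hx
  have key : ∀ s : ℝ, 0 ≤ s → (x, t + s) ∈ F.dom := by
    intro s hs
    rcases le_or_gt 0 (t + s) with h | h
    · exact hdom _ h
    · exact (F.interval x hxD).out ht (hdom 0 le_rfl) ⟨le_add_of_nonneg_right hs, h.le⟩
  have hmem : ∀ s : ℝ, 0 ≤ s →
      (F.flow x t, s) ∈ F.dom ∧ F.flow (F.flow x t) s = F.flow x (t + s) :=
    fun s hs => F.flow_add x t s ht (key s hs)
  refine ⟨F.mem_of_dom _ ht, fun s hs => (hmem s hs).1, ?_⟩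
  have h1 : Tendsto (fun s : ℝ => F.flow x (t + s)) atTop (nhds x₀) :=
    htend.comp (tendsto_atTop_add_const_left atTop t tendsto_id)
  refine h1.congr' ?_
  filter_upwards [eventually_ge_atTop (0 : ℝ)] with s hs
  exact ((hmem s hs).2).symm

lemma bwd (F : AuxFlow D f x₀) {x : X} {t : ℝ} (ht : (x, t) ∈ F.dom)
    (hz : F.flow x t ∈ F.basin) : x ∈ F.basin := by
  have hxD : x ∈ D := F.dom_subset _ ht
  obtain ⟨hzD, hzdom, hztend⟩ := hz
  set z := F.flow x t with hzdef
  set ψ : ℝ → X := fun s => if s ≤ t then F.flow x s else F.flow z (s - t) with hψ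
  set J : Set ℝ := ({s | (x, s) ∈ F.dom} ∩ Iic t) ∪ Ici t with hJ
  have hIx := F.interval x hxD
  have h0x : (x, (0 : ℝ)) ∈ F.dom := F.zero_mem x hxD
  have hJsub : ∀ s ∈ J, s ≤ t → (x, s) ∈ F.dom := by
    intro s hs hst
    rcases hs with h | h
    · exact h.1
    · have hst' : s = t := le_antisymm hst h
      rw [hst']; exact ht
  have hJord : J.OrdConnected := by
    refine ⟨fun a ha b hb c hc => ?_⟩
    rcases le_or_gt c t with hct | hct
    · left
      have hax : (x, a) ∈ F.dom := hJsub a ha (le_trans hc.1 hct)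
      exact ⟨hIx.out hax ht ⟨hc.1, hct⟩, hct⟩
    · right; exact hct.le
  have h0J : (0 : ℝ) ∈ J := by
    rcases le_or_gt 0 t with h | h
    · exact Or.inl ⟨h0x, h⟩
    · exact Or.inr h.le
  have hψ0 : ψ 0 = x := by
    rcases le_or_gt 0 t with h | h
    · simp only [hψ, if_pos h]
      exact F.flow_zero x hxD
    · have he : t + -t = 0 := by ring
      have h2 : (x, t + -t) ∈ F.dom := by rw [he]; exact h0x
      have h3 := (F.flow_add x t (-t) ht h2).2
      have h4 : ψ 0 = F.flow z (0 - t) := by simp [hψ, not_le.mpr h]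
      rw [h4, zero_sub, hzdef, h3, he, F.flow_zero x hxD]
  have hcont1 : ContinuousOn (fun s => F.flow x s) (J ∩ Iic t) :=
    fun s hs => (flow_contAt F (hJsub s hs.1 hs.2)).continuousWithinAt
  have hcont2 : ContinuousOn (fun s => F.flow z (s - t)) (J ∩ Ici t) := by
    intro s hs
    have hd : (z, s - t) ∈ F.dom := hzdom _ (sub_nonneg.mpr hs.2)
    have hc : ContinuousAt (fun s : ℝ => F.flow z (s - t)) s := by
      have h1 := flow_contAt F hd
      have h2 : ContinuousAt (fun s : ℝ => s - t) s :=
        (continuous_id.sub continuous_const).continuousAt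
      have h3 := Filter.Tendsto.comp h1 h2
      exact h3
    exact hc.continuousWithinAt
  have hψcont : ContinuousOn ψ J := by
    apply ContinuousOn.if
    · intro a ha
      have hfr : a ∈ frontier (Iic t) := ha.2
      rw [frontier_Iic] at hfr
      have hat : a = t := hfr
      subst hat
      rw [sub_self, F.flow_zero z hzD, hzdef]
    · refine hcont1.mono ?_
      intro s hs
      have h2 : closure {a : ℝ | a ≤ t} = Iic t := by
        rw [show {a : ℝ | a ≤ t} = Iic t from rfl, closure_Iic]
      exact ⟨hs.1, h2 ▸ hs.2⟩
    · refine hcont2.mono ?_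
      intro s hs
      refine ⟨hs.1, ?_⟩
      have : s ∈ closure {a : ℝ | ¬ a ≤ t} := hs.2
      have h2 : {a : ℝ | ¬ a ≤ t} = Ioi t := by ext a; simp [not_le]
      rw [h2, closure_Ioi] at this
      exact this
  have hψlift : ∀ s ∈ J, ψ s ∈ D ∧ f (ψ s) = f x₀ + Real.exp (-s) • (f x - f x₀) := by
    intro s hs
    rcases le_or_gt s t with h | h
    · have hd := hJsub s hs h
      refine ⟨?_, ?_⟩
      · simpa [hψ, if_pos h] using memD' F hd
      · simpa [hψ, if_pos h] using lifts' F hd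
    · have hd : (z, s - t) ∈ F.dom := hzdom _ (by linarith)
      have h1 : f (F.flow z (s - t)) = f x₀ + Real.exp (-(s - t)) • (f z - f x₀) := lifts' F hd
      have h2 : f z = f x₀ + Real.exp (-t) • (f x - f x₀) := lifts' F ht
      have h4 : ψ s = F.flow z (s - t) := by simp [hψ, not_le.mpr h]
      refine ⟨by rw [h4]; exact memD' F hd, ?_⟩
      rw [h4, h1, h2, add_sub_cancel_left, smul_smul, ← Real.exp_add]
      have h5 : -(s - t) + -t = -s := by ring
      rw [h5]
  have hmax := F.maximal x hxD J hJord h0J ψ hψcont hψ0 hψlift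
  have hsJ : ∀ s : ℝ, 0 ≤ s → s ∈ J := by
    intro s hs
    rcases le_or_gt s t with h | h
    · exact Or.inl ⟨hIx.out h0x ht ⟨hs, h⟩, h⟩
    · exact Or.inr h.le
  refine ⟨hxD, fun s hs => (hmax s (hsJ s hs)).1, ?_⟩
  have hsubt : Tendsto (fun s : ℝ => s - t) atTop atTop := by
    simpa [sub_eq_add_neg] using tendsto_atTop_add_const_right atTop (-t) tendsto_id
  refine (hztend.comp hsubt).congr' ?_
  filter_upwards [eventually_gt_atTop t, eventually_ge_atTop (0 : ℝ)] with s hst hs0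
  have h6 := (hmax s (hsJ s hs0)).2
  rw [← h6]
  simp [hψ, not_le.mpr hst]

lemma nbhd_basin (F : AuxFlow D f x₀) (hf : IsLocalHomeoOn f D) (hx₀ : x₀ ∈ D) :
    ∃ V : Set X, IsOpen V ∧ x₀ ∈ V ∧ V ⊆ F.basin := by
  obtain ⟨U, hUD, hUopen, hx₀U, hfUopen, hfC, g, hgC, hgf, hfg⟩ := hf x₀ hx₀
  obtain ⟨r, hr, hball⟩ := Metric.isOpen_iff.mp hfUopen (f x₀) ⟨x₀, hx₀U, rfl⟩
  refine ⟨U ∩ f ⁻¹' Metric.ball (f x₀) r, hfC.isOpen_inter_preimage hUopen Metric.isOpen_ball,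
    ⟨hx₀U, by simp [hr]⟩, ?_⟩
  rintro x ⟨hxU, hxball⟩
  set c : ℝ → Y := fun s => f x₀ + Real.exp (-s) • (f x - f x₀) with hc
  have h3 : ‖f x - f x₀‖ < r := by
    rw [Set.mem_preimage, Metric.mem_ball, dist_eq_norm] at hxball; exact hxball
  have hcball : ∀ s : ℝ, 0 ≤ s → c s ∈ Metric.ball (f x₀) r := by
    intro s hs
    have h1 : ‖c s - f x₀‖ = Real.exp (-s) * ‖f x - f x₀‖ := by
      rw [hc]; simp only [add_sub_cancel_left]
      rw [norm_smul, Real.norm_eq_abs, Real.abs_exp]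
    have h2 : Real.exp (-s) ≤ 1 := Real.exp_le_one_iff.mpr (by linarith)
    rw [Metric.mem_ball, dist_eq_norm, h1]
    calc Real.exp (-s) * ‖f x - f x₀‖ ≤ 1 * ‖f x - f x₀‖ :=
          mul_le_mul_of_nonneg_right h2 (norm_nonneg _)
      _ = ‖f x - f x₀‖ := one_mul _
      _ < r := h3
  have hcU : ∀ s : ℝ, 0 ≤ s → c s ∈ f '' U := fun s hs => hball (hcball s hs)
  set ψ : ℝ → X := fun s => g (c s) with hψ
  have hccont : Continuous c := by
    apply continuous_const.add
    exact (Real.continuous_exp.comp continuous_neg).smul continuous_const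
  have hψcont : ContinuousOn ψ (Ici 0) :=
    hgC.comp hccont.continuousOn (fun s hs => hcU s hs)
  have hψ0 : ψ 0 = x := by
    have h1 : c 0 = f x := by rw [hc]; simp
    show g (c 0) = x
    rw [h1]; exact hgf x hxU
  have hψlift : ∀ s ∈ Ici (0 : ℝ), ψ s ∈ D ∧ f (ψ s) = f x₀ + Real.exp (-s) • (f x - f x₀) :=
    fun s hs => ⟨hUD (hfg _ (hcU s hs)).1, (hfg _ (hcU s hs)).2⟩
  have hmax := F.maximal x (hUD hxU) (Ici 0) ordConnected_Ici self_mem_Ici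
    ψ hψcont hψ0 hψlift
  refine ⟨hUD hxU, fun s hs => (hmax s hs).1, ?_⟩
  have hclim : Tendsto c atTop (nhds (f x₀)) := by
    have h1 : Tendsto (fun s : ℝ => Real.exp (-s)) atTop (nhds 0) :=
      Real.tendsto_exp_neg_atTop_nhds_zero
    have h2 : Tendsto (fun s : ℝ => Real.exp (-s) • (f x - f x₀)) atTop (nhds 0) := by
      simpa using h1.smul_const (f x - f x₀)
    simpa using tendsto_const_nhds.add h2
  have hψlim : Tendsto ψ atTop (nhds x₀) := by
    have hgx₀ : ContinuousWithinAt g (f '' U) (f x₀) := hgC _ ⟨x₀, hx₀U, rfl⟩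
    have h4 : Tendsto c atTop (nhdsWithin (f x₀) (f '' U)) := by
      rw [tendsto_nhdsWithin_iff]
      exact ⟨hclim, eventually_atTop.mpr ⟨0, fun s hs => hcU s hs⟩⟩
    have h5 := hgx₀.tendsto.comp h4
    rwa [hgf x₀ hx₀U] at h5
  refine hψlim.congr' ?_
  filter_upwards [eventually_ge_atTop (0 : ℝ)] with s hs
  exact (hmax s hs).2

lemma basin_open (F : AuxFlow D f x₀) (hf : IsLocalHomeoOn f D) (hx₀ : x₀ ∈ D) :
    IsOpen F.basin := by
  obtain ⟨V, hVopen, hx₀V, hVbasin⟩ := nbhd_basin F hf hx₀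
  rw [isOpen_iff_forall_mem_open]
  intro x hx
  have hev : ∀ᶠ s in atTop, F.flow x s ∈ V := hx.2.2.eventually (hVopen.mem_nhds hx₀V)
  obtain ⟨T, hT⟩ := (hev.and (eventually_ge_atTop (0 : ℝ))).exists
  set W := {x' : X | (x', T) ∈ F.dom ∧ F.flow x' T ∈ V} with hW
  have hWopen : IsOpen W := by
    have h1 : IsOpen (F.dom ∩ (fun p : X × ℝ => F.flow p.1 p.2) ⁻¹' V) :=
      F.continuousOn.isOpen_inter_preimage F.isOpen_dom hVopen
    have h2 : Continuous (fun x' : X => ((x', T) : X × ℝ)) := by continuity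
    have h3 : W = (fun x' : X => ((x', T) : X × ℝ)) ⁻¹'
        (F.dom ∩ (fun p : X × ℝ => F.flow p.1 p.2) ⁻¹' V) := rfl
    rw [h3]
    exact h1.preimage h2
  exact ⟨W, fun x' hx' => bwd F hx'.1 (hVbasin hx'.2), hWopen, ⟨hx.2.1 T hT.2, hT.1⟩⟩

lemma image_open (hf : IsLocalHomeoOn f D) {A : Set X} (hA : IsOpen A) (hAD : A ⊆ D) :
    IsOpen (f '' A) := by
  rw [isOpen_iff_forall_mem_open]
  rintro y ⟨x, hxA, rfl⟩
  obtain ⟨U, hUD, hUopen, hxU, hfUopen, hfC, g, hgC, hgf, hfg⟩ := hf x (hAD hxA)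
  refine ⟨f '' U ∩ g ⁻¹' (A ∩ U), ?_, hgC.isOpen_inter_preimage hfUopen (hA.inter hUopen), ?_⟩
  · rintro y' ⟨hy'U, hy'g⟩
    exact ⟨g y', hy'g.1, (hfg _ hy'U).2⟩
  · refine ⟨⟨x, hxU, rfl⟩, ?_⟩
    show g (f x) ∈ A ∩ U
    rw [hgf x hxU]
    exact ⟨hxA, hxU⟩

lemma inj_basin (F : AuxFlow D f x₀) (hf : IsLocalHomeoOn f D) (hx₀ : x₀ ∈ D)
    {a b : X} (ha : a ∈ F.basin) (hb : b ∈ F.basin) (hab : f a = f b) : a = b := by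
  by_contra hne
  set E := {t : ℝ | 0 ≤ t ∧ F.flow a t = F.flow b t} with hE
  have hconta : ContinuousOn (fun t => F.flow a t) (Ici 0) :=
    fun t ht => (flow_contAt F (ha.2.1 t ht)).continuousWithinAt
  have hcontb : ContinuousOn (fun t => F.flow b t) (Ici 0) :=
    fun t ht => (flow_contAt F (hb.2.1 t ht)).continuousWithinAt
  have hEclosed : IsClosed E := by
    have h1 : ContinuousOn (fun t => F.flow a t - F.flow b t) (Ici 0) := hconta.sub hcontb
    have h2 : E = Ici 0 ∩ (fun t => F.flow a t - F.flow b t) ⁻¹' {0} := by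
      ext t
      simp only [hE, mem_setOf_eq, mem_inter_iff, mem_Ici, mem_preimage, mem_singleton_iff,
        sub_eq_zero]
    rw [h2]
    exact h1.preimage_isClosed_of_isClosed isClosed_Ici isClosed_singleton
  obtain ⟨U₀, hU₀D, hU₀open, hx₀U₀, hfU₀open, hfU₀C, g₀, hg₀C, hg₀f, hfg₀⟩ := hf x₀ hx₀
  have hEne : E.Nonempty := by
    have h1 : ∀ᶠ t in atTop, F.flow a t ∈ U₀ := ha.2.2.eventually (hU₀open.mem_nhds hx₀U₀)
    have h2 : ∀ᶠ t in atTop, F.flow b t ∈ U₀ := hb.2.2.eventually (hU₀open.mem_nhds hx₀U₀)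
    obtain ⟨T, hT⟩ := (h1.and (h2.and (eventually_ge_atTop (0 : ℝ)))).exists
    refine ⟨T, hT.2.2, ?_⟩
    have hfa : f (F.flow a T) = f (F.flow b T) := by
      rw [lifts' F (ha.2.1 T hT.2.2), lifts' F (hb.2.1 T hT.2.2), hab]
    calc F.flow a T = g₀ (f (F.flow a T)) := (hg₀f _ hT.1).symm
      _ = g₀ (f (F.flow b T)) := by rw [hfa]
      _ = F.flow b T := hg₀f _ hT.2.1
  have hbdd : BddBelow E := ⟨0, fun t ht => ht.1⟩
  set m := sInf E with hm
  have hmE : m ∈ E := hEclosed.csInf_mem hEne hbdd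
  have hm0 : 0 < m := by
    rcases (hmE.1).lt_or_eq with h | h
    · exact h
    · exfalso
      apply hne
      have h2 := hmE.2
      rw [← h] at h2
      rwa [F.flow_zero a ha.1, F.flow_zero b hb.1] at h2
  have hwD : F.flow a m ∈ D := memD' F (ha.2.1 m hmE.1)
  obtain ⟨Uw, hUwD, hUwopen, hwUw, hfUwopen, hfUwC, gw, hgwC, hgwf, hfgw⟩ := hf _ hwD
  have hca : ContinuousAt (fun t => F.flow a t) m := flow_contAt F (ha.2.1 m hmE.1)
  have hcb : ContinuousAt (fun t => F.flow b t) m := flow_contAt F (hb.2.1 m hmE.1)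
  have hwUwb : F.flow b m ∈ Uw := by rw [← hmE.2]; exact hwUw
  have hev : ∀ᶠ s in nhds m, F.flow a s ∈ Uw ∧ (F.flow b s ∈ Uw ∧ 0 < s) := by
    have e1 : ∀ᶠ s in nhds m, F.flow a s ∈ Uw := hca.eventually_mem (hUwopen.mem_nhds hwUw)
    have e2 : ∀ᶠ s in nhds m, F.flow b s ∈ Uw := hcb.eventually_mem (hUwopen.mem_nhds hwUwb)
    have e3 : ∀ᶠ s in nhds m, 0 < s := eventually_gt_nhds hm0
    exact e1.and (e2.and e3)
  have hlt : ∃ s, s < m ∧ (F.flow a s ∈ Uw ∧ (F.flow b s ∈ Uw ∧ 0 < s)) := by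
    have h5 : ∀ᶠ s in nhdsWithin m (Iio m),
        (F.flow a s ∈ Uw ∧ (F.flow b s ∈ Uw ∧ 0 < s)) ∧ s ∈ Iio m :=
      (hev.filter_mono nhdsWithin_le_nhds).and self_mem_nhdsWithin
    obtain ⟨s, hs⟩ := h5.exists
    exact ⟨s, hs.2, hs.1⟩
  obtain ⟨s, hsm, hsa, hsb, hs0⟩ := hlt
  have hfa : f (F.flow a s) = f (F.flow b s) := by
    rw [lifts' F (ha.2.1 s hs0.le), lifts' F (hb.2.1 s hs0.le), hab]
  have hsE : s ∈ E := by
    refine ⟨hs0.le, ?_⟩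
    calc F.flow a s = gw (f (F.flow a s)) := (hgwf _ hsa).symm
      _ = gw (f (F.flow b s)) := by rw [hfa]
      _ = F.flow b s := hgwf _ hsb
  have : m ≤ s := csInf_le hbdd hsE
  linarith

lemma frontier_not_image (F : AuxFlow D f x₀) (hf : IsLocalHomeoOn f D) (hx₀ : x₀ ∈ D)
    {x : X} (hxcl : x ∈ closure F.basin) (hxnot : x ∉ F.basin) (hxD : x ∈ D) :
    f x ∉ f '' F.basin := by
  rintro ⟨z, hz, hfz⟩
  have hopen := basin_open F hf hx₀
  obtain ⟨Uz, hUzD, hUzopen, hzUz, hfUzopen, hfUzC, gz, hgzC, hgzf, hfgz⟩ := hf z hz.1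
  have hfx : ContinuousAt f x := contAt_f hf hxD
  have hfxUz : f x ∈ f '' Uz := by rw [← hfz]; exact ⟨z, hzUz, rfl⟩
  have hgzcont : ContinuousAt gz (f x) := hgzC.continuousAt (hfUzopen.mem_nhds hfxUz)
  have hgzfx : gz (f x) = z := by rw [← hfz]; exact hgzf z hzUz
  haveI hnb : (nhdsWithin x F.basin).NeBot := mem_closure_iff_nhdsWithin_neBot.mp hxcl
  have t2 : Tendsto (fun x' => gz (f x')) (nhdsWithin x F.basin) (nhds z) := by
    have h1 : ContinuousAt (fun x' => gz (f x')) x := Filter.Tendsto.comp hgzcont hfx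
    have h3 : Tendsto (fun x' => gz (f x')) (nhds x) (nhds (gz (f x))) := h1
    rw [hgzfx] at h3
    exact h3.mono_left nhdsWithin_le_nhds
  have hev : ∀ᶠ x' in nhdsWithin x F.basin, x' = gz (f x') := by
    have e1 : ∀ᶠ x' in nhdsWithin x F.basin, gz (f x') ∈ F.basin :=
      t2.eventually_mem (hopen.mem_nhds hz)
    have e2 : ∀ᶠ x' in nhdsWithin x F.basin, f x' ∈ f '' Uz := by
      have h4 : Tendsto f (nhdsWithin x F.basin) (nhds (f x)) :=
        hfx.continuousWithinAt.tendsto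
      exact h4.eventually_mem (hfUzopen.mem_nhds hfxUz)
    have e3 : ∀ᶠ x' in nhdsWithin x F.basin, x' ∈ F.basin := self_mem_nhdsWithin
    filter_upwards [e1, e2, e3] with x' h1 h2 h3
    exact inj_basin F hf hx₀ h3 h1 ((hfgz _ h2).2).symm
  have t1 : Tendsto (fun x' : X => x') (nhdsWithin x F.basin) (nhds x) :=
    tendsto_id.mono_left nhdsWithin_le_nhds
  have hx_eq_z : x = z := tendsto_nhds_unique_of_eventuallyEq t1 t2 hev
  exact hxnot (hx_eq_z ▸ hz)

end AuxFlowAux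

open AuxFlowAux

/-- On the boundary of the attraction basin (taken in `D`) the trajectories have finite
life: `f(∂𝒜) ⊆ ∂f(𝒜)`, both `𝒜` and `∂𝒜` are invariant under the flow, and forward
trajectories through boundary points are not global in the future. -/
theorem boundary_basin_finite_life {X Y : Type*}
    [NormedAddCommGroup X] [NormedSpace ℝ X] [CompleteSpace X]
    [NormedAddCommGroup Y] [NormedSpace ℝ Y] [CompleteSpace Y]
    (D : Set X) (hDopen : IsOpen D) (hDne : D.Nonempty) (hDconn : IsConnected D)
    (f : X → Y) (hf : IsLocalHomeoOn f D) (x₀ : X) (hx₀ : x₀ ∈ D)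
    (F : AuxFlow D f x₀) :
    (f '' (frontier F.basin ∩ D) ⊆ frontier (f '' F.basin)) ∧
    (∀ x ∈ F.basin, ∀ t : ℝ, (x, t) ∈ F.dom → F.flow x t ∈ F.basin) ∧
    (∀ x ∈ frontier F.basin ∩ D, ∀ t : ℝ, (x, t) ∈ F.dom →
      F.flow x t ∈ frontier F.basin ∩ D) ∧
    ∀ x ∈ frontier F.basin ∩ D, BddAbove {t : ℝ | (x, t) ∈ F.dom} := by
  have hopen := basin_open F hf hx₀
  have hfr : frontier F.basin = closure F.basin \ F.basin := hopen.frontier_eq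
  have himg_open : IsOpen (f '' F.basin) := image_open hf hopen (fun x hx => hx.1)
  have hfrimg : frontier (f '' F.basin) = closure (f '' F.basin) \ (f '' F.basin) :=
    himg_open.frontier_eq
  have part2 : ∀ x ∈ F.basin, ∀ t : ℝ, (x, t) ∈ F.dom → F.flow x t ∈ F.basin :=
    fun x hx t ht => fwd F hx ht
  have part1 : f '' (frontier F.basin ∩ D) ⊆ frontier (f '' F.basin) := by
    rintro y ⟨x, ⟨hxf, hxD⟩, rfl⟩
    rw [hfr] at hxf
    rw [hfrimg]
    refine ⟨?_, ?_⟩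
    · exact (contAt_f hf hxD).continuousWithinAt.mem_closure_image hxf.1
    · exact frontier_not_image F hf hx₀ hxf.1 hxf.2 hxD
  have part3 : ∀ x ∈ frontier F.basin ∩ D, ∀ t : ℝ, (x, t) ∈ F.dom →
      F.flow x t ∈ frontier F.basin ∩ D := by
    rintro x ⟨hxf, hxD⟩ t ht
    rw [hfr] at hxf
    have hxtD : F.flow x t ∈ D := memD' F ht
    have hnot : F.flow x t ∉ F.basin := fun h => hxf.2 (bwd F ht h)
    have hcl : F.flow x t ∈ closure F.basin := by
      haveI hnb : (nhdsWithin x F.basin).NeBot := mem_closure_iff_nhdsWithin_neBot.mp hxf.1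
      have hca : ContinuousAt (fun x' => F.flow x' t) x := flow_contAt_fst F ht
      have hWopen : IsOpen {x' : X | (x', t) ∈ F.dom} := by
        have h2 : Continuous (fun x' : X => ((x', t) : X × ℝ)) := by continuity
        exact F.isOpen_dom.preimage h2
      have hWev : ∀ᶠ x' in nhdsWithin x F.basin, (x', t) ∈ F.dom :=
        eventually_nhdsWithin_of_eventually_nhds (hWopen.eventually_mem ht)
      have hbev : ∀ᶠ x' in nhdsWithin x F.basin, x' ∈ F.basin := self_mem_nhdsWithin
      have htd : Tendsto (fun x' => F.flow x' t) (nhdsWithin x F.basin) (nhds (F.flow x t)) :=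
        hca.mono_left nhdsWithin_le_nhds
      refine mem_closure_of_tendsto htd ?_
      filter_upwards [hWev, hbev] with x' h1 h2
      exact fwd F h2 h1
    exact ⟨by rw [hfr]; exact ⟨hcl, hnot⟩, hxtD⟩
  refine ⟨part1, part2, part3, ?_⟩
  rintro x ⟨hxf, hxD⟩
  by_contra hbdd
  have hall : ∀ t : ℝ, 0 ≤ t → (x, t) ∈ F.dom := by
    intro t htnn
    rcases not_bddAbove_iff.mp hbdd t with ⟨s, hs1, hs2⟩
    exact (F.interval x hxD).out (F.zero_mem x hxD) hs1 ⟨htnn, hs2.le⟩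
  obtain ⟨r, hr, hball⟩ := Metric.isOpen_iff.mp himg_open (f x₀) ⟨x₀, x0_basin F hx₀, rfl⟩
  have hlim : Tendsto (fun T : ℝ => Real.exp (-T) * ‖f x - f x₀‖) atTop (nhds 0) := by
    simpa using Real.tendsto_exp_neg_atTop_nhds_zero.mul_const ‖f x - f x₀‖
  obtain ⟨T, hTr, hT0⟩ :=
    ((hlim.eventually (eventually_lt_nhds hr)).and (eventually_ge_atTop (0 : ℝ))).exists
  have hflowT : F.flow x T ∈ frontier F.basin ∩ D := part3 x ⟨hxf, hxD⟩ T (hall T hT0)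
  have himgT : f (F.flow x T) ∈ frontier (f '' F.basin) := part1 ⟨F.flow x T, hflowT, rfl⟩
  have hmem : f (F.flow x T) ∈ f '' F.basin := by
    apply hball
    rw [Metric.mem_ball, dist_eq_norm, lifts' F (hall T hT0), add_sub_cancel_left,
      norm_smul, Real.norm_eq_abs, Real.abs_exp]
    exact hTr
  rw [hfrimg] at himgT
  exact himgT.2 hmem
end

section
/- Let X and Y be Banach spaces, D ⊆ X a nonempty open connected set, x₀ ∈ D, and let f : D → Y be a C¹ map such that f'(x) is a continuous linear isomorphism of X onto Y for every x ∈ D. Assume that for every set B ⊆ D which is bounded in D one has sup_{x ∈ B} ‖f'(x)⁻¹‖ < +∞. Then for every closed set B bounded in D and every x ∈ B, each connected component of f⁻¹([f(x₀); f(x)]) ∩ B is compact, where [f(x₀); f(x)] denotes the line segment in Y from f(x₀) to f(x). -/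
set_option linter.unusedSectionVars false
set_option maxHeartbeats 1000000

open Set Metric Filter Topology

/-- Relative clopen argument on a preconnected set. -/
theorem aux_clopen {α : Type*} [TopologicalSpace α] {K E : Set α}
    (hK : IsPreconnected K) (hE : E ⊆ K) (hne : E.Nonempty)
    (hop : ∀ e ∈ E, ∃ V : Set α, IsOpen V ∧ e ∈ V ∧ K ∩ V ⊆ E)
    (hcl : ∀ q ∈ K, q ∈ closure E → q ∈ E) : K ⊆ E := by
  classical
  choose V hVopen hVmem hVsub using hop
  set u : Set α := ⋃ (e : α) (he : e ∈ E), V e he with hu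
  have huopen : IsOpen u := isOpen_iUnion fun e => isOpen_iUnion fun he => hVopen e he
  have hKu : K ∩ u ⊆ E := by
    rintro q ⟨hqK, hqu⟩
    simp only [hu, mem_iUnion] at hqu
    obtain ⟨e, he, hqV⟩ := hqu
    exact hVsub e he ⟨hqK, hqV⟩
  have hEu : E ⊆ u := fun e he => by
    simp only [hu, mem_iUnion]; exact ⟨e, he, hVmem e he⟩
  by_contra hne'
  obtain ⟨q, hqK, hqE⟩ : ∃ q ∈ K, q ∉ E := by
    by_contra h; push_neg at h; exact hne' h
  have hqcl : q ∉ closure E := fun h => hqE (hcl q hqK h)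
  have := hK u (closure E)ᶜ huopen (isClosed_closure.isOpen_compl)
    (fun p hp => by
      by_cases hpc : p ∈ closure E
      · exact Or.inl (hEu (hcl p hp hpc))
      · exact Or.inr hpc)
    ⟨hne.choose, hE hne.choose_spec, hEu hne.choose_spec⟩
    ⟨q, hqK, hqcl⟩
  obtain ⟨p, hpK, hpu, hpc⟩ := this
  exact hpc (subset_closure (hKu ⟨hpK, hpu⟩))

theorem aux_arith {τ r₁ r₂ s : ℝ} (h2 : s ∈ uIcc τ r₂) (h1 : s ∉ uIcc τ r₁) :
    |s - r₁| ≤ |r₂ - r₁| := by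
  rw [Set.mem_uIcc] at h2
  rw [Set.mem_uIcc] at h1
  push_neg at h1
  obtain ⟨ha, hb⟩ := h1
  rcases abs_cases (r₂ - r₁) with ⟨h, _⟩ | ⟨h, _⟩ <;> rw [h] <;>
    rcases abs_cases (s - r₁) with ⟨h', _⟩ | ⟨h', _⟩ <;> rw [h'] <;>
    rcases h2 with ⟨h2a, h2b⟩ | ⟨h2a, h2b⟩ <;>
    rcases le_or_gt τ s with hts | hts <;>
    rcases le_or_gt r₁ s with hr1s | hr1s <;>
    first
      | linarith
      | linarith [hb hr1s]
      | linarith [ha hts]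

section Aux

variable {X Y : Type*}
  [NormedAddCommGroup X] [NormedSpace ℝ X] [CompleteSpace X]
  [NormedAddCommGroup Y] [NormedSpace ℝ Y] [CompleteSpace Y]
  {D : Set X} {f : X → Y} {f' : X → (X ≃L[ℝ] Y)}

theorem aux_strict (hDopen : IsOpen D)
    (hdf : ∀ x ∈ D, HasFDerivAt f (f' x : X →L[ℝ] Y) x)
    (hC1 : ContinuousOn (fun x : X => ((f' x : X →L[ℝ] Y))) D)
    {p : X} (hp : p ∈ D) :
    HasStrictFDerivAt f ((f' p : X →L[ℝ] Y)) p :=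
  hasStrictFDerivAt_of_hasFDerivAt_of_continuousAt
    (Filter.eventually_of_mem (hDopen.mem_nhds hp) fun y hy => hdf y hy)
    (hC1.continuousAt (hDopen.mem_nhds hp))

theorem aux_inj (hDopen : IsOpen D)
    (hdf : ∀ x ∈ D, HasFDerivAt f (f' x : X →L[ℝ] Y) x)
    (hC1 : ContinuousOn (fun x : X => ((f' x : X →L[ℝ] Y))) D)
    {p : X} (hp : p ∈ D) :
    ∃ U : Set X, IsOpen U ∧ p ∈ U ∧ U ⊆ D ∧ InjOn f U := by
  have hS := aux_strict hDopen hdf hC1 hp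
  set Φ := hS.toOpenPartialHomeomorph f with hΦ
  refine ⟨Φ.source ∩ D, Φ.open_source.inter hDopen,
    ⟨hS.mem_toOpenPartialHomeomorph_source, hp⟩, inter_subset_right, ?_⟩
  have : InjOn f Φ.source := by
    have h := Φ.injOn
    rwa [hS.toOpenPartialHomeomorph_coe] at h
  exact this.mono inter_subset_left

theorem aux_loclift (hDopen : IsOpen D)
    (hdf : ∀ x ∈ D, HasFDerivAt f (f' x : X →L[ℝ] Y) x)
    (hC1 : ContinuousOn (fun x : X => ((f' x : X →L[ℝ] Y))) D)
    {p : X} (hp : p ∈ D) {a v : Y} {σ : ℝ} (hfp : f p = a + σ • v) :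
    ∃ δ > (0:ℝ), ∃ U : Set X, ∃ γ : ℝ → X, IsOpen U ∧ U ⊆ D ∧ InjOn f U ∧ p ∈ U ∧ γ σ = p ∧
      ContinuousOn γ (ball σ δ) ∧
      (∀ s ∈ ball σ δ, γ s ∈ D ∧ γ s ∈ U ∧ f (γ s) = a + s • v) ∧
      HasDerivAt γ (((f' p).symm : Y →L[ℝ] X) v) σ := by
  have hS := aux_strict hDopen hdf hC1 hp
  set Φ := hS.toOpenPartialHomeomorph f with hΦ
  have hcoe : (Φ : X → Y) = f := hS.toOpenPartialHomeomorph_coe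
  set U : Set X := Φ.source ∩ D with hU
  have hUopen : IsOpen U := Φ.open_source.inter hDopen
  have hpU : p ∈ U := ⟨hS.mem_toOpenPartialHomeomorph_source, hp⟩
  have hinj : InjOn f U := by
    have h := Φ.injOn
    rw [hcoe] at h
    exact h.mono inter_subset_left
  set g : Y → X := (Φ.symm : Y → X) with hg
  have hgfp : g (f p) = p := by
    rw [hg, ← hcoe]; exact Φ.left_inv hS.mem_toOpenPartialHomeomorph_source
  have hgcontAt : ContinuousAt g (f p) :=
    Φ.continuousAt_symm hS.image_mem_toOpenPartialHomeomorph_target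
  -- the good neighbourhood of f p
  have hGood : (Φ.target ∩ g ⁻¹' U) ∈ 𝓝 (f p) := by
    refine Filter.inter_mem (Φ.open_target.mem_nhds hS.image_mem_toOpenPartialHomeomorph_target) ?_
    exact hgcontAt.preimage_mem_nhds (by rw [hgfp]; exact hUopen.mem_nhds hpU)
  set c : ℝ → Y := fun s => a + s • v with hc
  have hccont : Continuous c := by fun_prop
  have hcσ : c σ = f p := hfp.symm
  have hball : c ⁻¹' (Φ.target ∩ g ⁻¹' U) ∈ 𝓝 σ := by
    apply hccont.continuousAt.preimage_mem_nhds
    rw [hcσ]; exact hGood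
  obtain ⟨δ, hδ, hballsub⟩ := Metric.mem_nhds_iff.mp hball
  refine ⟨δ, hδ, U, g ∘ c, hUopen, inter_subset_right, hinj, hpU, by simp [Function.comp, hcσ, hgfp], ?_, ?_, ?_⟩
  · exact Φ.continuousOn_symm.comp hccont.continuousOn
      (fun s hs => (hballsub hs).1)
  · intro s hs
    have h1 := hballsub hs
    refine ⟨(h1.2 : g (c s) ∈ U).2, h1.2, ?_⟩
    have := Φ.right_inv h1.1
    rw [hcoe] at this
    exact this
  · have hgd : HasFDerivAt g (((f' p).symm : Y →L[ℝ] X)) (f p) := by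
      have h := hS.to_localInverse (f := f) (f' := f' p) (a := p)
      rw [hS.localInverse_def] at h
      exact h.hasFDerivAt
    have hcd : HasDerivAt c v σ := by
      simpa [hc] using ((hasDerivAt_id σ).smul_const v).const_add a
    rw [← hcσ] at hgd
    exact hgd.comp_hasDerivAt σ hcd

theorem aux_agree (hDopen : IsOpen D)
    (hdf : ∀ x ∈ D, HasFDerivAt f (f' x : X →L[ℝ] Y) x)
    (hC1 : ContinuousOn (fun x : X => ((f' x : X →L[ℝ] Y))) D)
    {A : Set ℝ} (hA : IsPreconnected A) {c : ℝ → Y} {γ₁ γ₂ : ℝ → X}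
    (h₁ : ContinuousOn γ₁ A) (h₂ : ContinuousOn γ₂ A)
    (hD1 : ∀ s ∈ A, γ₁ s ∈ D)
    (hf1 : ∀ s ∈ A, f (γ₁ s) = c s) (hf2 : ∀ s ∈ A, f (γ₂ s) = c s)
    {s₀ : ℝ} (hs₀ : s₀ ∈ A) (heq : γ₁ s₀ = γ₂ s₀) : EqOn γ₁ γ₂ A := by
  intro r hr
  have hsub : A ⊆ {s ∈ A | γ₁ s = γ₂ s} := by
    apply aux_clopen hA (sep_subset _ _) ⟨s₀, hs₀, heq⟩
    · rintro e ⟨heA, heeq⟩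
      obtain ⟨U, hUopen, hUmem, hUD, hUinj⟩ := aux_inj hDopen hdf hC1 (hD1 e heA)
      have h1n : γ₁ ⁻¹' U ∈ 𝓝[A] e := (h₁.continuousWithinAt heA) (hUopen.mem_nhds hUmem)
      have h2n : γ₂ ⁻¹' U ∈ 𝓝[A] e :=
        (h₂.continuousWithinAt heA) (hUopen.mem_nhds (heeq ▸ hUmem))
      obtain ⟨V, hVopen, hVmem, hVsub⟩ := mem_nhdsWithin.mp (Filter.inter_mem h1n h2n)
      refine ⟨V, hVopen, hVmem, ?_⟩
      rintro q ⟨hqA, hqV⟩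
      have := hVsub ⟨hqV, hqA⟩
      exact ⟨hqA, hUinj this.1 this.2 (by rw [hf1 q hqA, hf2 q hqA])⟩
    · rintro q hqA hqcl
      have hne : (𝓝[{s ∈ A | γ₁ s = γ₂ s}] q).NeBot :=
        mem_closure_iff_nhdsWithin_neBot.mp hqcl
      have hsubA : {s ∈ A | γ₁ s = γ₂ s} ⊆ A := sep_subset _ _
      have t₁ : Filter.Tendsto γ₁ (𝓝[{s ∈ A | γ₁ s = γ₂ s}] q) (𝓝 (γ₁ q)) :=
        (h₁.continuousWithinAt hqA).mono_left (nhdsWithin_mono q hsubA)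
      have t₂ : Filter.Tendsto γ₂ (𝓝[{s ∈ A | γ₁ s = γ₂ s}] q) (𝓝 (γ₂ q)) :=
        (h₂.continuousWithinAt hqA).mono_left (nhdsWithin_mono q hsubA)
      have t₁' : Filter.Tendsto γ₁ (𝓝[{s ∈ A | γ₁ s = γ₂ s}] q) (𝓝 (γ₂ q)) := by
        refine t₂.congr' ?_
        filter_upwards [self_mem_nhdsWithin] with s hs
        exact hs.2.symm
      exact ⟨hqA, tendsto_nhds_unique t₁ t₁'⟩
  exact (hsub hr).2

end Aux


open Set Metric Filter Topology

/-- Lemma 2.3, (a-2) ⟹ (b): if `f : D → Y` is `C¹` with everywhere invertible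
derivative and `sup_{x ∈ B} ‖f'(x)⁻¹‖ < ∞` on every set `B` bounded in `D`, then for
every closed set `B` bounded in `D` and every `x ∈ B`, each connected component of
`f⁻¹([f(x₀);f(x)]) ∩ B` is compact. -/
theorem components_compact_of_bounded_inverse {X Y : Type*}
    [NormedAddCommGroup X] [NormedSpace ℝ X] [CompleteSpace X]
    [NormedAddCommGroup Y] [NormedSpace ℝ Y] [CompleteSpace Y]
    (D : Set X) (hDopen : IsOpen D) (hDne : D.Nonempty) (hDconn : IsConnected D)
    (x₀ : X) (hx₀ : x₀ ∈ D)
    (f : X → Y) (f' : X → (X ≃L[ℝ] Y))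
    (hdf : ∀ x ∈ D, HasFDerivAt f (f' x : X →L[ℝ] Y) x)
    (hC1 : ContinuousOn (fun x : X => ((f' x : X →L[ℝ] Y))) D)
    (hbdd : ∀ B : Set X, Bornology.IsBounded B → closure B ⊆ D →
      ∃ C : ℝ, ∀ x ∈ B, ‖((f' x).symm : Y →L[ℝ] X)‖ ≤ C) :
    ∀ B : Set X, IsClosed B → Bornology.IsBounded B → B ⊆ D →
      ∀ x ∈ B, ∀ z ∈ f ⁻¹' segment ℝ (f x₀) (f x) ∩ B,
        IsCompact (connectedComponentIn (f ⁻¹' segment ℝ (f x₀) (f x) ∩ B) z) := by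
  classical
  intro B hBcl hBbd hBD x hxB z hzS
  have hzB : z ∈ B := hzS.2
  have hzD : z ∈ D := hBD hzB
  have hfc : ∀ q ∈ D, ContinuousAt f q := fun q hq => (hdf q hq).continuousAt
  set S : Set X := f ⁻¹' segment ℝ (f x₀) (f x) ∩ B with hSdef
  have hSB : S ⊆ B := inter_subset_right
  have hSD : S ⊆ D := fun q hq => hBD hq.2
  have hsegcl : IsClosed (segment ℝ (f x₀) (f x)) := by
    rw [segment_eq_image']
    exact (isCompact_Icc.image (by fun_prop)).isClosed
  have hScl : IsClosed S := by
    rw [← isSeqClosed_iff_isClosed]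
    intro u q hu hq
    have hqB : q ∈ B := hBcl.isSeqClosed (fun n => (hu n).2) hq
    refine ⟨?_, hqB⟩
    have hten : Tendsto (fun n => f (u n)) atTop (𝓝 (f q)) :=
      (hfc q (hBD hqB)).tendsto.comp hq
    exact hsegcl.isSeqClosed (fun n => (hu n).1) hten
  set K := connectedComponentIn S z with hKdef
  have hKS : K ⊆ S := connectedComponentIn_subset S z
  have hzK : z ∈ K := mem_connectedComponentIn hzS
  have hKpre : IsPreconnected K := isPreconnected_connectedComponentIn
  have hKcl : IsClosed K := by
    have h1 : closure K ⊆ S := hScl.closure_subset_iff.mpr hKS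
    exact isClosed_of_closure_subset
      (hKpre.closure.subset_connectedComponentIn (subset_closure hzK) h1)
  have hKB : K ⊆ B := fun q hq => (hKS hq).2
  have hKD : K ⊆ D := fun q hq => hSD (hKS hq)
  obtain ⟨C, hC⟩ := hbdd B hBbd (by rw [hBcl.closure_eq]; exact hBD)
  have hC0 : 0 ≤ C := (norm_nonneg _).trans (hC z hzB)
  by_cases hv0 : f x = f x₀
  · -- degenerate case : the segment is a single point, K = {z}
    have hseg1 : segment ℝ (f x₀) (f x) = {f x₀} := by rw [hv0, segment_same]
    have hfz : f z = f x₀ := by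
      have := hzS.1
      rwa [mem_preimage, hseg1, mem_singleton_iff] at this
    have hKz : K ⊆ {z} := by
      obtain ⟨U, hUopen, hUmem, hUD, hUinj⟩ := aux_inj hDopen hdf hC1 hzD
      apply aux_clopen hKpre (singleton_subset_iff.mpr hzK) ⟨z, rfl⟩
      · rintro e he
        rw [mem_singleton_iff] at he; subst he
        refine ⟨U, hUopen, hUmem, ?_⟩
        rintro q ⟨hqK, hqU⟩
        have h1 : f q = f x₀ := by
          have := (hKS hqK).1
          rwa [mem_preimage, hseg1, mem_singleton_iff] at this
        exact mem_singleton_iff.mpr (hUinj hqU hUmem (h1.trans hfz.symm))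
      · intro q _ hq
        rwa [closure_singleton] at hq
    have : K = {z} := Subset.antisymm hKz (singleton_subset_iff.mpr hzK)
    rw [this]; exact isCompact_singleton
  · -- main case : the segment is nondegenerate
    set v : Y := f x - f x₀ with hvdef
    have hvne : v ≠ 0 := sub_ne_zero.mpr hv0
    have hvnorm : (0:ℝ) < ‖v‖ := norm_pos_iff.mpr hvne
    obtain ⟨ψ, hψnorm, hψv⟩ := exists_dual_vector ℝ v (norm_ne_zero_iff.mpr hvne)
    have hψv' : ψ v = ‖v‖ := by exact_mod_cast hψv
    set c : ℝ → Y := fun s => f x₀ + s • v with hcdef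
    set t : X → ℝ := fun p => ψ (f p - f x₀) / ‖v‖ with htdef
    have htp : ∀ {p : X} {s : ℝ}, f p = c s → t p = s := by
      intro p s hp
      have h1 : f p - f x₀ = s • v := by rw [hp]; simp [hcdef]
      have h2 : ψ (f p - f x₀) = s * ‖v‖ := by rw [h1, map_smul, hψv', smul_eq_mul]
      simp only [htdef]
      rw [h2, mul_div_assoc, div_self hvnorm.ne', mul_one]
    have ht_cont : ∀ q ∈ D, ContinuousAt t q := by
      intro q hq
      exact (ψ.continuous.continuousAt.comp ((hfc q hq).sub continuousAt_const)).div_const _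
    have hmemc : ∀ {p : X}, p ∈ S → f p = c (t p) ∧ t p ∈ Icc (0:ℝ) 1 := by
      intro p hp
      have h1 := hp.1
      rw [mem_preimage, segment_eq_image'] at h1
      obtain ⟨s, hs, hfp⟩ := h1
      have h2 : f p = c s := by rw [hcdef]; rw [← hvdef] at hfp; exact hfp.symm
      rw [htp h2]; exact ⟨h2, hs⟩
    set τ : ℝ := t z with hτdef
    have hfzc : f z = c τ := (hmemc hzS).1
    set L : (ℝ → X) → ℝ → Prop := fun γ r =>
      γ τ = z ∧ ContinuousOn γ (uIcc τ r) ∧ ∀ s ∈ uIcc τ r, γ s ∈ D ∧ f (γ s) = c s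
      with hLdef
    set J : Set ℝ := {r | ∃ γ, L γ r} with hJdef
    have hres : ∀ γ r, L γ r → ∀ s ∈ uIcc τ r, L γ s := by
      intro γ r h s hs
      have hsub : uIcc τ s ⊆ uIcc τ r := uIcc_subset_uIcc left_mem_uIcc hs
      exact ⟨h.1, h.2.1.mono hsub, fun u hu => h.2.2 u (hsub hu)⟩
    have hτJ : τ ∈ J := by
      refine ⟨fun _ => z, rfl, continuousOn_const, ?_⟩
      intro s hs
      rw [uIcc_self, mem_singleton_iff] at hs
      subst hs
      exact ⟨hzD, hfzc⟩
    have huniq : ∀ r γ₁ γ₂, L γ₁ r → L γ₂ r → EqOn γ₁ γ₂ (uIcc τ r) := by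
      intro r γ₁ γ₂ h₁ h₂
      exact aux_agree hDopen hdf hC1 isPreconnected_uIcc h₁.2.1 h₂.2.1
        (fun s hs => (h₁.2.2 s hs).1) (fun s hs => (h₁.2.2 s hs).2)
        (fun s hs => (h₂.2.2 s hs).2) left_mem_uIcc (h₁.1.trans h₂.1.symm)
    set γm : ℝ → X := fun s => if h : ∃ γ, L γ s then h.choose s else z with hγmdef
    have hγm_eq : ∀ r ∈ J, ∀ γ, L γ r → ∀ s ∈ uIcc τ r, γm s = γ s := by
      intro r hr γ hγ s hs
      have hLs : L γ s := hres γ r hγ s hs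
      have hsJ : ∃ γ', L γ' s := ⟨γ, hLs⟩
      simp only [hγmdef]
      rw [dif_pos hsJ]
      exact huniq s hsJ.choose γ hsJ.choose_spec hLs right_mem_uIcc
    have hγmlift : ∀ r ∈ J, L γm r := by
      intro r hr
      obtain ⟨γ, hγ⟩ := hr
      have he : EqOn γm γ (uIcc τ r) := fun s hs => hγm_eq r ⟨γ, hγ⟩ γ hγ s hs
      exact ⟨(he left_mem_uIcc).trans hγ.1, hγ.2.1.congr he,
        fun s hs => by rw [he hs]; exact hγ.2.2 s hs⟩
    have hglue : ∀ r₁ ∈ J, ∀ (β δ : ℝ) (γl : ℝ → X), 0 < δ → r₁ ∈ ball β δ →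
        ContinuousOn γl (ball β δ) → (∀ s ∈ ball β δ, γl s ∈ D ∧ f (γl s) = c s) →
        γl r₁ = γm r₁ →
        ∀ r₂, uIcc τ r₂ ⊆ uIcc τ r₁ ∪ ball β (δ/2) →
          r₂ ∈ J ∧ (r₂ ∈ ball β δ → γm r₂ = γl r₂) := by
      intro r₁ hr₁ β δ γl hδ hr₁ball hγlcont hγlprop hγlr₁ r₂ hsub
      have hlift₁ := hγmlift r₁ hr₁
      have hhalf : ball β (δ/2) ⊆ ball β δ := ball_subset_ball (by linarith)
      have hA : IsPreconnected (uIcc τ r₁ ∩ ball β δ) := by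
        have h1 : OrdConnected (uIcc τ r₁ ∩ ball β δ) := by
          apply Set.OrdConnected.inter ordConnected_uIcc
          rw [Real.ball_eq_Ioo]; exact ordConnected_Ioo
        exact h1.isPreconnected
      have hagree : EqOn γm γl (uIcc τ r₁ ∩ ball β δ) :=
        aux_agree hDopen hdf hC1 hA (hlift₁.2.1.mono inter_subset_left)
          (hγlcont.mono inter_subset_right)
          (fun s hs => (hlift₁.2.2 s hs.1).1) (fun s hs => (hlift₁.2.2 s hs.1).2)
          (fun s hs => (hγlprop s hs.2).2)
          (⟨right_mem_uIcc, hr₁ball⟩ : r₁ ∈ uIcc τ r₁ ∩ ball β δ) hγlr₁.symm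
      set γ' : ℝ → X := fun s => if s ∈ uIcc τ r₁ then γm s else γl s with hγ'def
      have hγ'ball : ∀ s ∈ ball β δ, γ' s = γl s := by
        intro s hs
        by_cases h : s ∈ uIcc τ r₁
        · simp only [hγ'def, if_pos h]; exact hagree ⟨h, hs⟩
        · simp only [hγ'def, if_neg h]
      have hγ'u : EqOn γ' γm (uIcc τ r₁) := fun s hs => by simp only [hγ'def, if_pos hs]
      have hlift' : L γ' r₂ := by
        refine ⟨?_, ?_, ?_⟩
        · rw [hγ'u left_mem_uIcc]; exact hlift₁.1
        · intro s hs
          by_cases hsball : s ∈ ball β δ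
          · have h1 : ContinuousAt γl s := hγlcont.continuousAt (isOpen_ball.mem_nhds hsball)
            have h2 : γl =ᶠ[𝓝 s] γ' := by
              filter_upwards [isOpen_ball.mem_nhds hsball] with u hu
              exact (hγ'ball u hu).symm
            exact (h1.congr h2).continuousWithinAt
          · have hsu : s ∈ uIcc τ r₁ := by
              rcases hsub hs with h | h
              · exact h
              · exact absurd (hhalf h) hsball
            have h1 : ContinuousWithinAt γm (uIcc τ r₁) s := hlift₁.2.1 s hsu
            have h2 : ContinuousWithinAt γ' (uIcc τ r₁) s := h1.congr hγ'u (hγ'u hsu)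
            have hW : uIcc τ r₂ ∩ {u : ℝ | δ/2 < dist u β} ⊆ uIcc τ r₁ := by
              rintro u ⟨hu1, hu2⟩
              rcases hsub hu1 with h | h
              · exact h
              · simp only [mem_setOf_eq] at hu2
                exact absurd (mem_ball.mp h) (by linarith)
            have h3 : ContinuousWithinAt γ' (uIcc τ r₂ ∩ {u : ℝ | δ/2 < dist u β}) s :=
              h2.mono hW
            apply h3.mono_of_mem_nhdsWithin
            apply Filter.inter_mem self_mem_nhdsWithin
            apply mem_nhdsWithin_of_mem_nhds
            have hWopen : IsOpen {u : ℝ | δ/2 < dist u β} :=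
              isOpen_lt continuous_const (by fun_prop)
            apply hWopen.mem_nhds
            simp only [mem_setOf_eq]
            have h4 : ¬ dist s β < δ := fun h => hsball (mem_ball.mpr h)
            linarith [not_lt.mp h4]
        · intro s hs
          rcases hsub hs with h | h
          · rw [hγ'u h]; exact hlift₁.2.2 s h
          · rw [hγ'ball s (hhalf h)]; exact hγlprop s (hhalf h)
      have hr₂J : r₂ ∈ J := ⟨γ', hlift'⟩
      refine ⟨hr₂J, fun hr₂ball => ?_⟩
      rw [hγm_eq r₂ hr₂J γ' hlift' r₂ right_mem_uIcc, hγ'ball r₂ hr₂ball]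
    have hkey : ∀ r₁ ∈ J, (∃ ε > (0:ℝ), ball r₁ ε ⊆ J) ∧
        HasDerivAt γm (((f' (γm r₁)).symm : Y →L[ℝ] X) v) r₁ := by
      intro r₁ hr₁
      have hlift₁ := hγmlift r₁ hr₁
      have hp : γm r₁ ∈ D := (hlift₁.2.2 r₁ right_mem_uIcc).1
      have hfp : f (γm r₁) = f x₀ + r₁ • v := (hlift₁.2.2 r₁ right_mem_uIcc).2
      obtain ⟨δ, hδ, U, γl, hUopen, hUD, hUinj, hpU, hγlσ, hγlcont, hγlprop, hγlderiv⟩ :=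
        aux_loclift hDopen hdf hC1 hp hfp
      have hglue' : ∀ r₂ ∈ ball r₁ (δ/2), r₂ ∈ J ∧ γm r₂ = γl r₂ := by
        intro r₂ hr₂
        have hsub : uIcc τ r₂ ⊆ uIcc τ r₁ ∪ ball r₁ (δ/2) := by
          intro s hs
          by_cases h : s ∈ uIcc τ r₁
          · exact Or.inl h
          · refine Or.inr ?_
            rw [mem_ball, Real.dist_eq]
            rw [mem_ball, Real.dist_eq] at hr₂
            exact lt_of_le_of_lt (aux_arith hs h) hr₂
        have h := hglue r₁ hr₁ r₁ δ γl hδ (mem_ball_self hδ) hγlcont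
          (fun s hs => ⟨(hγlprop s hs).1, (hγlprop s hs).2.2⟩) hγlσ r₂ hsub
        exact ⟨h.1, h.2 (ball_subset_ball (by linarith : δ/2 ≤ δ) hr₂)⟩
      refine ⟨⟨δ/2, by linarith, fun r₂ hr₂ => (hglue' r₂ hr₂).1⟩, ?_⟩
      have heq : γm =ᶠ[𝓝 r₁] γl := by
        filter_upwards [isOpen_ball.mem_nhds (mem_ball_self (by linarith : (0:ℝ) < δ/2))]
          with r₂ hr₂
        exact (hglue' r₂ hr₂).2
      exact hγlderiv.congr_of_eventuallyEq heq
    have hderiv : ∀ r ∈ J, HasDerivAt γm (((f' (γm r)).symm : Y →L[ℝ] X) v) r :=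
      fun r hr => (hkey r hr).2
    have hM : K ⊆ {q ∈ K | t q ∈ J ∧ γm (t q) = q} := by
      apply aux_clopen hKpre (sep_subset _ _)
      · exact ⟨z, hzK, hτJ, (hγmlift τ hτJ).1⟩
      · rintro e ⟨heK, heJ, heγ⟩
        have heD : e ∈ D := hKD heK
        have hfe : f e = f x₀ + (t e) • v := (hmemc (hKS heK)).1
        obtain ⟨δ, hδ, U, γl, hUopen, hUD, hUinj, heU, hγlσ, hγlcont, hγlprop, _⟩ :=
          aux_loclift hDopen hdf hC1 heD hfe
        have hcontt : ContinuousOn t U := fun u hu => (ht_cont u (hUD hu)).continuousWithinAt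
        refine ⟨U ∩ t ⁻¹' (ball (t e) (δ/2)),
          hcontt.isOpen_inter_preimage hUopen isOpen_ball,
          ⟨heU, mem_preimage.mpr (mem_ball_self (by linarith))⟩, ?_⟩
        rintro q ⟨hqK, hqU, hqt⟩
        rw [mem_preimage] at hqt
        have hsub : uIcc τ (t q) ⊆ uIcc τ (t e) ∪ ball (t e) (δ/2) := by
          intro s hs
          by_cases h : s ∈ uIcc τ (t e)
          · exact Or.inl h
          · refine Or.inr ?_
            rw [mem_ball, Real.dist_eq]
            rw [mem_ball, Real.dist_eq] at hqt
            exact lt_of_le_of_lt (aux_arith hs h) hqt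
        have hγl_e : γl (t e) = γm (t e) := by rw [hγlσ]; exact heγ.symm
        have h := hglue (t e) heJ (t e) δ γl hδ (mem_ball_self hδ) hγlcont
          (fun s hs => ⟨(hγlprop s hs).1, (hγlprop s hs).2.2⟩) hγl_e (t q) hsub
        have hqball : t q ∈ ball (t e) δ := ball_subset_ball (by linarith) hqt
        have hq_eq : γl (t q) = q := by
          apply hUinj (hγlprop (t q) hqball).2.1 hqU
          rw [(hγlprop (t q) hqball).2.2]
          exact ((hmemc (hKS hqK)).1).symm
        exact ⟨hqK, h.1, (h.2 hqball).trans hq_eq⟩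
      · intro q hqK hqcl
        obtain ⟨u, hu, hulim⟩ := mem_closure_iff_seq_limit.mp hqcl
        have hqD : q ∈ D := hKD hqK
        have hfq : f q = f x₀ + (t q) • v := (hmemc (hKS hqK)).1
        obtain ⟨δ, hδ, U, γl, hUopen, hUD, hUinj, hqU, hγlσ, hγlcont, hγlprop, _⟩ :=
          aux_loclift hDopen hdf hC1 hqD hfq
        have htu : Tendsto (fun n => t (u n)) atTop (𝓝 (t q)) :=
          (ht_cont q hqD).tendsto.comp hulim
        have h1 : ∀ᶠ n in atTop, u n ∈ U := hulim (hUopen.mem_nhds hqU)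
        have h2 : ∀ᶠ n in atTop, t (u n) ∈ ball (t q) (δ/4) :=
          htu (isOpen_ball.mem_nhds (mem_ball_self (by linarith)))
        obtain ⟨n, hnU, hnball⟩ := (h1.and h2).exists
        obtain ⟨hunK, hunJ, hunγ⟩ := hu n
        have hσnball : t (u n) ∈ ball (t q) δ := ball_subset_ball (by linarith) hnball
        have hγlσn : γl (t (u n)) = u n := by
          apply hUinj (hγlprop (t (u n)) hσnball).2.1 hnU
          rw [(hγlprop (t (u n)) hσnball).2.2]
          exact ((hmemc (hKS hunK)).1).symm
        have hsub : uIcc τ (t q) ⊆ uIcc τ (t (u n)) ∪ ball (t q) (δ/2) := by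
          intro s hs
          by_cases h : s ∈ uIcc τ (t (u n))
          · exact Or.inl h
          · refine Or.inr ?_
            rw [mem_ball, Real.dist_eq]
            have h3 := aux_arith hs h
            rw [mem_ball, Real.dist_eq] at hnball
            have h4 : |s - t q| ≤ |s - t (u n)| + |t (u n) - t q| := abs_sub_le s (t (u n)) (t q)
            have h5 : |t q - t (u n)| = |t (u n) - t q| := abs_sub_comm _ _
            linarith
        have h := hglue (t (u n)) hunJ (t q) δ γl hδ hσnball hγlcont
          (fun s hs => ⟨(hγlprop s hs).1, (hγlprop s hs).2.2⟩)
          (hγlσn.trans hunγ.symm) (t q) hsub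
        refine ⟨hqK, h.1, ?_⟩
        rw [h.2 (mem_ball_self hδ), hγlσ]
    have hMK : ∀ q ∈ K, t q ∈ J ∧ γm (t q) = q := fun q hq => (hM hq).2
    set T : Set ℝ := t '' K with hTdef
    have hTJ : T ⊆ J := by rintro s ⟨q, hq, rfl⟩; exact (hMK q hq).1
    have hγmT : ∀ s ∈ T, γm s ∈ K ∧ t (γm s) = s := by
      rintro s ⟨q, hq, rfl⟩
      rw [(hMK q hq).2]; exact ⟨hq, rfl⟩
    have hT01 : T ⊆ Icc (0:ℝ) 1 := by rintro s ⟨q, hq, rfl⟩; exact (hmemc (hKS hq)).2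
    have hTpre : IsPreconnected T :=
      hKpre.image t (fun q hq => (ht_cont q (hKD hq)).continuousWithinAt)
    have hTord : OrdConnected T := hTpre.ordConnected
    have hnorm : ∀ s ∈ T, ‖((f' (γm s)).symm : Y →L[ℝ] X) v‖ ≤ C * ‖v‖ := by
      intro s hs
      refine le_trans (ContinuousLinearMap.le_opNorm _ _) ?_
      exact mul_le_mul_of_nonneg_right (hC _ (hKB (hγmT s hs).1)) (norm_nonneg _)
    have hLip : ∀ s₁ ∈ T, ∀ s₂ ∈ T, ‖γm s₂ - γm s₁‖ ≤ C * ‖v‖ * |s₂ - s₁| := by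
      have key : ∀ s₁ ∈ T, ∀ s₂ ∈ T, s₁ ≤ s₂ →
          ‖γm s₂ - γm s₁‖ ≤ C * ‖v‖ * (s₂ - s₁) := by
        intro s₁ h₁ s₂ h₂ hle
        have hIcc : Icc s₁ s₂ ⊆ T := hTord.out h₁ h₂
        exact norm_image_sub_le_of_norm_deriv_le_segment'
          (f := γm) (f' := fun s => ((f' (γm s)).symm : Y →L[ℝ] X) v)
          (fun s hs => (hderiv s (hTJ (hIcc hs))).hasDerivWithinAt)
          (fun s hs => hnorm s (hIcc (Ico_subset_Icc_self hs)))
          s₂ (right_mem_Icc.mpr hle)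
      intro s₁ h₁ s₂ h₂
      rcases le_total s₁ s₂ with h | h
      · rw [abs_of_nonneg (by linarith)]; exact key s₁ h₁ s₂ h₂ h
      · rw [abs_of_nonpos (by linarith), norm_sub_rev]
        have h6 := key s₂ h₂ s₁ h₁ h
        have h7 : C * ‖v‖ * (s₁ - s₂) = C * ‖v‖ * -(s₂ - s₁) := by ring
        linarith [h6, h7.ge, h7.le]
    have hCv : (0:ℝ) ≤ C * ‖v‖ := mul_nonneg hC0 (norm_nonneg _)
    have hTcl : IsClosed T := by
      rw [← isSeqClosed_iff_isClosed]
      intro su sl hsu hslim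
      have hca : CauchySeq (fun n => γm (su n)) := by
        rw [Metric.cauchySeq_iff]
        intro ε hε
        have hd : (0:ℝ) < C * ‖v‖ + 1 := by linarith
        obtain ⟨N, hN⟩ := Metric.cauchySeq_iff.mp hslim.cauchySeq (ε / (C * ‖v‖ + 1))
          (div_pos hε hd)
        refine ⟨N, fun m hm n hn => ?_⟩
        rw [dist_eq_norm]
        have hl := hLip (su n) (hsu n) (su m) (hsu m)
        have h2 := hN m hm n hn
        rw [Real.dist_eq] at h2
        calc ‖γm (su m) - γm (su n)‖ ≤ C * ‖v‖ * |su m - su n| := hl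
          _ ≤ (C * ‖v‖ + 1) * |su m - su n| := by nlinarith [abs_nonneg (su m - su n)]
          _ < (C * ‖v‖ + 1) * (ε / (C * ‖v‖ + 1)) := by
              exact mul_lt_mul_of_pos_left h2 hd
          _ = ε := by field_simp
      obtain ⟨q, hqlim⟩ := cauchySeq_tendsto_of_complete hca
      have hqK : q ∈ K := hKcl.isSeqClosed (fun n => (hγmT _ (hsu n)).1) hqlim
      have ht1 : Tendsto (fun n => t (γm (su n))) atTop (𝓝 (t q)) :=
        (ht_cont q (hKD hqK)).tendsto.comp hqlim
      have ht2 : Tendsto su atTop (𝓝 (t q)) :=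
        ht1.congr fun n => (hγmT _ (hsu n)).2
      exact ⟨q, hqK, (tendsto_nhds_unique hslim ht2).symm⟩
    have hTcpt : IsCompact T := isCompact_Icc.of_isClosed_subset hTcl hT01
    have hKT : K = γm '' T := by
      apply Subset.antisymm
      · intro q hq
        exact ⟨t q, mem_image_of_mem t hq, (hMK q hq).2⟩
      · rintro p ⟨s, hs, rfl⟩
        exact (hγmT s hs).1
    rw [hKT]
    exact hTcpt.image_of_continuousOn
      (fun s hs => ((hderiv s (hTJ hs)).continuousAt).continuousWithinAt)
end

section
/- Let X and Y be Banach spaces, D ⊆ X a nonempty open connected set, f : D → Y a local homeomorphism, x₀ ∈ D, and let (D_Φ, Φ) be the maximal auxiliary flow for f at x₀. Assume condition (b): for every closed set B bounded in D and every x ∈ B, each connected component of f⁻¹([f(x₀); f(x)]) ∩ B is compact, where [f(x₀); f(x)] is the segment in Y from f(x₀) to f(x). Then condition (c) holds: for every closed set B bounded in D and every x ∈ B, if Φ(x,t) ∈ B for all t ≥ 0 with (x,t) ∈ D_Φ, then [0,∞) ⊆ I_x, i.e. the trajectory through x is global in the future. -/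
open Set Filter

/-- Lemma 2.3, (b) ⟹ (c): if for every closed set `B` bounded in `D` and every `x ∈ B`
the connected components of `f⁻¹([f(x₀);f(x)]) ∩ B` are compact, then every trajectory
of the auxiliary flow which stays in a closed bounded subset of `D` is global in the
future. -/
theorem trapped_trajectories_global {X Y : Type*}
    [NormedAddCommGroup X] [NormedSpace ℝ X] [CompleteSpace X]
    [NormedAddCommGroup Y] [NormedSpace ℝ Y] [CompleteSpace Y]
    (D : Set X) (hDopen : IsOpen D) (hDne : D.Nonempty) (hDconn : IsConnected D)
    (f : X → Y) (hf : IsLocalHomeoOn f D) (x₀ : X) (hx₀ : x₀ ∈ D)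
    (F : AuxFlow D f x₀)
    (hb : ∀ B : Set X, IsClosed B → Bornology.IsBounded B → B ⊆ D →
      ∀ x ∈ B, ∀ z ∈ f ⁻¹' segment ℝ (f x₀) (f x) ∩ B,
        IsCompact (connectedComponentIn (f ⁻¹' segment ℝ (f x₀) (f x) ∩ B) z)) :
    ∀ B : Set X, IsClosed B → Bornology.IsBounded B → B ⊆ D →
      ∀ x ∈ B, (∀ t : ℝ, 0 ≤ t → (x, t) ∈ F.dom → F.flow x t ∈ B) →
        ∀ t : ℝ, 0 ≤ t → (x, t) ∈ F.dom := by
  intro B hBcl hBbd hBD x hxB htraj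
  by_contra hcon
  push_neg at hcon
  obtain ⟨t₀, ht₀0, ht₀⟩ := hcon
  have hxD : x ∈ D := hBD hxB
  -- the (open) set of times for which the flow through x is defined
  have hIopen : IsOpen {t : ℝ | (x, t) ∈ F.dom} :=
    F.isOpen_dom.preimage (continuous_const.prodMk continuous_id)
  -- the infimum of the bad nonnegative times
  set S : Set ℝ := {t : ℝ | 0 ≤ t ∧ (x, t) ∉ F.dom} with hS
  have hSne : S.Nonempty := ⟨t₀, ht₀0, ht₀⟩
  have hSbdd : BddBelow S := ⟨0, fun s hs => hs.1⟩
  set T : ℝ := sInf S with hT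
  have hT0 : 0 ≤ T := le_csInf hSne fun s hs => hs.1
  have hIcoI : ∀ s : ℝ, 0 ≤ s → s < T → (x, s) ∈ F.dom := by
    intro s h0 hsT
    by_contra h
    exact absurd (csInf_le hSbdd ⟨h0, h⟩) (not_le.2 hsT)
  have hTnot : (x, T) ∉ F.dom := by
    intro hmem
    obtain ⟨ε, hε, hball⟩ := Metric.isOpen_iff.1 hIopen T hmem
    obtain ⟨s, hsS, hsl⟩ := (csInf_lt_iff hSbdd hSne).1 (by linarith : sInf S < T + ε)
    have hTs : T ≤ s := csInf_le hSbdd hsS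
    exact hsS.2 (hball (by rw [Metric.mem_ball, Real.dist_eq, abs_lt]; constructor <;> linarith))
  have hTpos : 0 < T := by
    rcases hT0.lt_or_eq with h | h
    · exact h
    · exact absurd (h ▸ F.zero_mem x hxD) hTnot
  -- the target curve in Y
  set c : ℝ → Y := fun t => f x₀ + Real.exp (-t) • (f x - f x₀) with hc
  have hccont : Continuous c :=
    continuous_const.add ((Real.continuous_exp.comp continuous_neg).smul continuous_const)
  -- the flow through x stays in the set Sx for t ∈ [0, T)
  set Sx : Set X := f ⁻¹' segment ℝ (f x₀) (f x) ∩ B with hSx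
  have hmemSx : ∀ t : ℝ, 0 ≤ t → t < T → F.flow x t ∈ Sx := by
    intro t h0 htT
    have hd := hIcoI t h0 htT
    refine ⟨?_, htraj t h0 hd⟩
    show f (F.flow x t) ∈ segment ℝ (f x₀) (f x)
    rw [show f (F.flow x t) = f x₀ + Real.exp (-t) • (f x - f x₀) from F.lifts (x, t) hd,
      segment_eq_image']
    exact ⟨Real.exp (-t), ⟨(Real.exp_pos _).le, Real.exp_le_one_iff.2 (neg_nonpos.2 h0)⟩, rfl⟩
  have hxSx : x ∈ Sx := ⟨right_mem_segment ℝ (f x₀) (f x), hxB⟩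
  have hK : IsCompact (connectedComponentIn Sx x) := hb B hBcl hBbd hBD x hxB x hxSx
  have hKS : connectedComponentIn Sx x ⊆ Sx := connectedComponentIn_subset _ _
  -- continuity of the flow through x
  have hφcont : ContinuousOn (fun t => F.flow x t) {t : ℝ | (x, t) ∈ F.dom} := by
    have h1 : ContinuousOn (fun t : ℝ => ((x, t) : X × ℝ)) {t : ℝ | (x, t) ∈ F.dom} :=
      (continuous_const.prodMk continuous_id).continuousOn
    exact F.continuousOn.comp h1 fun t ht => ht
  have hIco : Ico (0 : ℝ) T ⊆ {t : ℝ | (x, t) ∈ F.dom} := fun s hs => hIcoI s hs.1 hs.2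
  -- the trajectory stays in the connected component of x, which is compact
  have hφK : ∀ t : ℝ, 0 ≤ t → t < T → F.flow x t ∈ connectedComponentIn Sx x := by
    have hpre : IsPreconnected ((fun t => F.flow x t) '' Ico 0 T) :=
      isPreconnected_Ico.image _ (hφcont.mono hIco)
    have himg : (fun t => F.flow x t) '' Ico 0 T ⊆ Sx := by
      rintro _ ⟨t, ht, rfl⟩; exact hmemSx t ht.1 ht.2
    have hxin : x ∈ (fun t => F.flow x t) '' Ico 0 T :=
      ⟨0, ⟨le_refl 0, hTpos⟩, F.flow_zero x hxD⟩
    intro t h0 htT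
    exact hpre.subset_connectedComponentIn hxin himg ⟨t, ⟨h0, htT⟩, rfl⟩
  -- a sequence of times increasing to T
  set u : ℕ → ℝ := fun n => max (T / 2) (T - 1 / (n + 1)) with hu
  have hu0 : ∀ n, 0 ≤ u n := fun n => le_trans (by linarith) (le_max_left _ _)
  have huT : ∀ n, u n < T := fun n =>
    max_lt (by linarith) (sub_lt_self _ (by positivity))
  have hulim : Tendsto u atTop (nhds T) := by
    have h1 : Tendsto (fun n : ℕ => T - 1 / ((n : ℝ) + 1)) atTop (nhds (T - 0)) :=
      tendsto_const_nhds.sub tendsto_one_div_add_atTop_nhds_zero_nat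
    have h2 := (tendsto_const_nhds (x := T / 2) (f := atTop)).max h1
    rw [sub_zero, max_eq_right (by linarith : T / 2 ≤ T)] at h2
    exact h2
  have hφu : ∀ n, F.flow x (u n) ∈ connectedComponentIn Sx x :=
    fun n => hφK _ (hu0 n) (huT n)
  obtain ⟨z, hzK, σ, hσ, hconv⟩ := hK.tendsto_subseq hφu
  have huσ : Tendsto (fun n => u (σ n)) atTop (nhds T) := hulim.comp hσ.tendsto_atTop
  have hzD : z ∈ D := hBD (hKS hzK).2
  -- the local homeomorphism at z
  obtain ⟨U, hUD, hUopen, hzU, hfUopen, hfU, g, hgcont, hgf, hfg⟩ := hf z hzD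
  have hfz : f z = c T := by
    have h1 : Tendsto (fun n => f (F.flow x (u (σ n)))) atTop (nhds (f z)) :=
      (hfU.continuousAt (hUopen.mem_nhds hzU)).tendsto.comp hconv
    have h2 : (fun n => f (F.flow x (u (σ n)))) = fun n => c (u (σ n)) :=
      funext fun n => F.lifts (x, u (σ n)) (hIcoI _ (hu0 _) (huT _))
    rw [h2] at h1
    exact tendsto_nhds_unique h1 ((hccont.tendsto T).comp huσ)
  have hcT : c T ∈ f '' U := ⟨z, hzU, hfz⟩
  obtain ⟨ε, hεpos, hball⟩ := Metric.isOpen_iff.1 (hfUopen.preimage hccont) T hcT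
  -- pick a time t₁ close to T with flow x t₁ ∈ U
  have hev1 : ∀ᶠ n in atTop, T - ε < u (σ n) := huσ.eventually (eventually_gt_nhds (show T - ε < T by linarith))
  have hev2 : ∀ᶠ n in atTop, F.flow x (u (σ n)) ∈ U := hconv.eventually (hUopen.mem_nhds hzU)
  obtain ⟨N, h1N, h2N⟩ := (hev1.and hev2).exists
  set t₁ : ℝ := u (σ N) with ht₁
  have ht₁0 : 0 ≤ t₁ := hu0 _
  have ht₁T : t₁ < T := huT _
  have hφt₁U : F.flow x t₁ ∈ U := h2N
  have hcmem : ∀ t : ℝ, t₁ ≤ t → t ≤ T → c t ∈ f '' U := by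
    intro t hl hr
    exact hball (by rw [Metric.mem_ball, Real.dist_eq, abs_lt]; constructor <;> linarith)
  have hjunc : g (c t₁) = F.flow x t₁ := by
    have hl : f (F.flow x t₁) = c t₁ := F.lifts (x, t₁) (hIcoI _ ht₁0 ht₁T)
    rw [← hl]
    exact hgf _ hφt₁U
  -- the extended lifting
  set ψ : ℝ → X := fun t => if t ≤ t₁ then F.flow x t else g (c t) with hψ
  have hψ0 : ψ 0 = x := by
    rw [show ψ 0 = F.flow x 0 from if_pos ht₁0]
    exact F.flow_zero x hxD
  have eqOn1 : EqOn ψ (fun t => F.flow x t) (Icc 0 t₁) := fun t htm => if_pos htm.2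
  have eqOn2 : EqOn ψ (fun t => g (c t)) (Icc t₁ T) := by
    intro t htm
    by_cases h : t ≤ t₁
    · have hte : t = t₁ := le_antisymm h htm.1
      rw [hte, show ψ t₁ = F.flow x t₁ from if_pos le_rfl]
      exact hjunc.symm
    · exact if_neg h
  have hψc1 : ContinuousOn ψ (Icc 0 t₁) :=
    ((hφcont.mono fun s hs => hIcoI s hs.1 (lt_of_le_of_lt hs.2 ht₁T)).congr eqOn1)
  have hψc2 : ContinuousOn ψ (Icc t₁ T) :=
    ((hgcont.comp hccont.continuousOn fun t htm => hcmem t htm.1 htm.2).congr eqOn2)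
  have hψcont : ContinuousOn ψ (Icc 0 T) := by
    intro t htm
    have h1 : ContinuousWithinAt ψ (Icc 0 t₁) t := by
      by_cases h : t ∈ Icc (0 : ℝ) t₁
      · exact hψc1 t h
      · exact continuousWithinAt_of_notMem_closure (by rwa [isClosed_Icc.closure_eq])
    have h2 : ContinuousWithinAt ψ (Icc t₁ T) t := by
      by_cases h : t ∈ Icc t₁ T
      · exact hψc2 t h
      · exact continuousWithinAt_of_notMem_closure (by rwa [isClosed_Icc.closure_eq])
    exact (h1.union h2).mono fun s hs =>
      (le_total s t₁).imp (fun hh => ⟨hs.1, hh⟩) fun hh => ⟨hh, hs.2⟩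
  have hlift : ∀ t ∈ Icc (0 : ℝ) T, ψ t ∈ D ∧ f (ψ t) = f x₀ + Real.exp (-t) • (f x - f x₀) := by
    intro t htm
    by_cases h : t ≤ t₁
    · have hd := hIcoI t htm.1 (lt_of_le_of_lt h ht₁T)
      rw [show ψ t = F.flow x t from if_pos h]
      exact ⟨F.mem_of_dom _ hd, F.lifts _ hd⟩
    · have hcm := hcmem t (not_le.1 h).le htm.2
      rw [show ψ t = g (c t) from if_neg h]
      obtain ⟨hg1, hg2⟩ := hfg _ hcm
      exact ⟨hUD hg1, hg2⟩
  have hfinal := F.maximal x hxD (Icc 0 T) Set.ordConnected_Icc ⟨le_refl 0, hT0⟩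
    ψ hψcont hψ0 hlift T ⟨hT0, le_refl T⟩
  exact hTnot hfinal.1
end

section
/- Let X and Y be Banach spaces, D ⊆ X a nonempty open connected set, f : D → Y a local homeomorphism, x₀ ∈ D, and let (D_Φ, Φ) be the maximal auxiliary flow for f at x₀. Assume condition (c): for every closed set B bounded in D and every x ∈ B, if Φ(x,t) ∈ B for all t ≥ 0 with (x,t) ∈ D_Φ, then [0,∞) ⊆ I_x. If there exists a global Lyapunov function for Φ, then f is injective on D and f(D) is star-shaped with respect to f(x₀) (for every y ∈ f(D) and s ∈ [0,1], f(x₀) + s(y − f(x₀)) ∈ f(D)). -/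
open Set Filter

open Topology

/-- Injectivity and star-shaped image via a global Lyapunov function: if trajectories
trapped in closed bounded subsets of `D` are global in the future (condition (c)) and
the auxiliary flow admits a global Lyapunov function, then `f` is injective on `D` and
`f(D)` is star-shaped with respect to `f(x₀)`. -/
theorem injOn_starShaped_of_lyapunov {X Y : Type*}
    [NormedAddCommGroup X] [NormedSpace ℝ X] [CompleteSpace X]
    [NormedAddCommGroup Y] [NormedSpace ℝ Y] [CompleteSpace Y]
    (D : Set X) (hDopen : IsOpen D) (hDne : D.Nonempty) (hDconn : IsConnected D)
    (f : X → Y) (hf : IsLocalHomeoOn f D) (x₀ : X) (hx₀ : x₀ ∈ D)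
    (F : AuxFlow D f x₀)
    (hc : ∀ B : Set X, IsClosed B → Bornology.IsBounded B → B ⊆ D →
      ∀ x ∈ B, (∀ t : ℝ, 0 ≤ t → (x, t) ∈ F.dom → F.flow x t ∈ B) →
        ∀ t : ℝ, 0 ≤ t → (x, t) ∈ F.dom)
    (k : X → ℝ) (hkcont : ContinuousOn k D) (hknonneg : ∀ x ∈ D, 0 ≤ k x)
    (hkcoercive : ∀ a : ℝ, 0 < a →
      Bornology.IsBounded {x ∈ D | k x ≤ a} ∧ closure {x ∈ D | k x ≤ a} ⊆ D)
    (hkdecr : ∀ x ∈ D, ∀ t₁ t₂ : ℝ, (x, t₁) ∈ F.dom → (x, t₂) ∈ F.dom → t₁ ≤ t₂ →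
      k (F.flow x t₂) ≤ k (F.flow x t₁)) :
    Set.InjOn f D ∧
      ∀ y ∈ f '' D, ∀ s ∈ Set.Icc (0 : ℝ) 1, f x₀ + s • (y - f x₀) ∈ f '' D := by
  classical
  -- f is continuous on D
  have hfc : ∀ x ∈ D, ContinuousAt f x := by
    intro x hx
    obtain ⟨V, hVD, hVopen, hxV, _, hfV, _⟩ := hf x hx
    exact hfV.continuousAt (hVopen.mem_nhds hxV)
  -- global forward existence
  have hglobal : ∀ x ∈ D, ∀ t : ℝ, 0 ≤ t → (x, t) ∈ F.dom := by
    intro x hx t ht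
    have ha : (0:ℝ) < k x + 1 := by linarith [hknonneg x hx]
    obtain ⟨hb, hcl⟩ := hkcoercive (k x + 1) ha
    refine hc (closure {z ∈ D | k z ≤ k x + 1}) isClosed_closure hb.closure hcl x
      (subset_closure ⟨hx, by linarith⟩) ?_ t ht
    intro u hu hdomu
    refine subset_closure ⟨F.mem_of_dom _ hdomu, ?_⟩
    have h1 := hkdecr x hx 0 u (F.zero_mem x hx) hdomu hu
    rw [F.flow_zero x hx] at h1
    linarith
  -- chart at x₀
  obtain ⟨U, hUD, hUopen, hx₀U, hfUopen, hfUc, g, hgc, hgf, hfg⟩ := hf x₀ hx₀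
  obtain ⟨ε, hε, hball⟩ := Metric.isOpen_iff.mp hfUopen (f x₀) ⟨x₀, hx₀U, rfl⟩
  set W : Set X := U ∩ f ⁻¹' Metric.ball (f x₀) (ε/2) with hWdef
  have hgW : ∀ y ∈ Metric.ball (f x₀) (ε/2), g y ∈ W := by
    intro y hy
    have hyU : y ∈ f '' U := hball (Metric.ball_subset_ball (by linarith) hy)
    refine ⟨(hfg y hyU).1, ?_⟩
    simp only [mem_preimage, (hfg y hyU).2]
    exact hy
  -- the canonical entry time
  set S : X → ℝ := fun x => max 0 (Real.log (2 * (‖f x - f x₀‖ + 1) / ε)) with hSdef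
  have hS0 : ∀ x, 0 ≤ S x := fun x => le_max_left _ _
  have hS' : ∀ (x : X) (u : ℝ), S x ≤ u → Real.exp (-u) * ‖f x - f x₀‖ < ε / 2 := by
    intro x u hu
    set N := ‖f x - f x₀‖ with hN
    have hN0 : 0 ≤ N := norm_nonneg _
    have hpos : 0 < 2 * (N + 1) / ε := by positivity
    have h1 : Real.exp (-u) ≤ Real.exp (-(Real.log (2 * (N + 1) / ε))) := by
      apply Real.exp_le_exp.mpr
      have h2 : Real.log (2 * (N + 1) / ε) ≤ S x := le_max_right _ _
      linarith
    have h2 : Real.exp (-(Real.log (2 * (N + 1) / ε))) = ε / (2 * (N + 1)) := by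
      rw [Real.exp_neg, Real.exp_log hpos, inv_div]
    calc Real.exp (-u) * N ≤ ε / (2 * (N + 1)) * N := by
          rw [← h2]; exact mul_le_mul_of_nonneg_right h1 hN0
      _ < ε / 2 := by
          rw [div_mul_eq_mul_div, div_lt_div_iff₀ (by positivity) (by norm_num)]
          nlinarith
  -- the chart lemma: once a trajectory visits W, it is given by g of the ray
  have chart : ∀ x ∈ D, ∀ t₀ : ℝ, 0 ≤ t₀ → F.flow x t₀ ∈ W →
      ∀ u : ℝ, 0 ≤ u → Real.exp (-u) * ‖f x - f x₀‖ < ε →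
      F.flow x u = g (f x₀ + Real.exp (-u) • (f x - f x₀)) := by
    intro x hx t₀ ht₀ hzW u hu hub
    set z := F.flow x t₀ with hzdef
    have hdomt₀ : (x, t₀) ∈ F.dom := hglobal x hx t₀ ht₀
    have hzD : z ∈ D := F.mem_of_dom _ hdomt₀
    have hfz : f z = f x₀ + Real.exp (-t₀) • (f x - f x₀) := F.lifts _ hdomt₀
    have hzb : Real.exp (-t₀) * ‖f x - f x₀‖ < ε / 2 := by
      have hball2 := hzW.2
      simp only [mem_preimage, Metric.mem_ball] at hball2
      rwa [hfz, dist_eq_norm, add_sub_cancel_left, norm_smul, Real.norm_eq_abs,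
        abs_of_pos (Real.exp_pos _)] at hball2
    set J : Set ℝ := {s | 0 ≤ t₀ + s ∧ Real.exp (-(t₀ + s)) * ‖f x - f x₀‖ < ε} with hJdef
    have hJord : J.OrdConnected := by
      constructor
      intro s₁ h₁ s₂ h₂ s hs
      refine ⟨by linarith [hs.1, h₁.1], ?_⟩
      calc Real.exp (-(t₀ + s)) * ‖f x - f x₀‖
          ≤ Real.exp (-(t₀ + s₁)) * ‖f x - f x₀‖ := by
            exact mul_le_mul_of_nonneg_right
              (Real.exp_le_exp.mpr (by linarith [hs.1])) (norm_nonneg _)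
        _ < ε := h₁.2
    have h0J : (0:ℝ) ∈ J := ⟨by simpa using ht₀, by rw [add_zero]; linarith⟩
    set ψ : ℝ → X := fun s => g (f x₀ + Real.exp (-(t₀ + s)) • (f x - f x₀)) with hψdef
    have hhd : ∀ s : ℝ, dist (f x₀ + Real.exp (-(t₀ + s)) • (f x - f x₀)) (f x₀)
        = Real.exp (-(t₀ + s)) * ‖f x - f x₀‖ := by
      intro s
      rw [dist_eq_norm, add_sub_cancel_left, norm_smul, Real.norm_eq_abs,
        abs_of_pos (Real.exp_pos _)]
    have hmaps : MapsTo (fun s : ℝ => f x₀ + Real.exp (-(t₀ + s)) • (f x - f x₀)) J (f '' U) := by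
      intro s hs
      apply hball
      rw [Metric.mem_ball, hhd]
      exact hs.2
    have hhc : Continuous (fun s : ℝ => f x₀ + Real.exp (-(t₀ + s)) • (f x - f x₀)) := by
      fun_prop
    have hψc : ContinuousOn ψ J := hgc.comp hhc.continuousOn hmaps
    have hψ0 : ψ 0 = z := by
      have h00 : f x₀ + Real.exp (-(t₀ + 0)) • (f x - f x₀) = f z := by
        rw [add_zero, ← hfz]
      rw [hψdef]
      simp only
      rw [h00]
      exact hgf z hzW.1
    have hlift : ∀ s ∈ J, ψ s ∈ D ∧ f (ψ s) = f x₀ + Real.exp (-s) • (f z - f x₀) := by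
      intro s hs
      have hmem : (f x₀ + Real.exp (-(t₀ + s)) • (f x - f x₀)) ∈ f '' U := hmaps hs
      refine ⟨hUD (hfg _ hmem).1, ?_⟩
      rw [hψdef]
      simp only
      rw [(hfg _ hmem).2, hfz, add_sub_cancel_left, smul_smul, ← Real.exp_add]
      have harg : -s + -t₀ = -(t₀ + s) := by ring
      rw [harg]
    have hmax := F.maximal z hzD J hJord h0J ψ hψc hψ0 hlift
    have hsJ : (u - t₀) ∈ J := by
      have h1 : t₀ + (u - t₀) = u := by ring
      exact ⟨by rw [h1]; exact hu, by rw [h1]; exact hub⟩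
    obtain ⟨hdz, heq⟩ := hmax (u - t₀) hsJ
    obtain ⟨_, hadd⟩ := F.flow_add x t₀ (u - t₀) hdomt₀
      (by rw [show t₀ + (u - t₀) = u by ring]; exact hglobal x hx u hu)
    rw [show t₀ + (u - t₀) = u by ring] at hadd
    rw [← hadd, ← heq, hψdef]
    simp only
    rw [show t₀ + (u - t₀) = u by ring]
  -- once a trajectory visits W it is in W at all admissible later times
  have hWmem : ∀ x ∈ D, ∀ u : ℝ, 0 ≤ u → Real.exp (-u) * ‖f x - f x₀‖ < ε / 2 →
      (∃ t₀, 0 ≤ t₀ ∧ F.flow x t₀ ∈ W) → F.flow x u ∈ W := by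
    rintro x hx u hu hub ⟨t₀, ht₀, hW⟩
    rw [chart x hx t₀ ht₀ hW u hu (by linarith)]
    apply hgW
    rw [Metric.mem_ball, dist_eq_norm, add_sub_cancel_left, norm_smul, Real.norm_eq_abs,
      abs_of_pos (Real.exp_pos _)]
    exact hub
  -- the basin of x₀
  set A : Set X := {x | x ∈ D ∧ F.flow x (S x) ∈ W} with hAdef
  have hentry : ∀ x ∈ D, (∃ t₀, 0 ≤ t₀ ∧ F.flow x t₀ ∈ W) → x ∈ A := by
    intro x hx he
    exact ⟨hx, hWmem x hx (S x) (hS0 x) (hS' x (S x) le_rfl) he⟩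
  have hx₀A : x₀ ∈ A := by
    refine hentry x₀ hx₀ ⟨0, le_rfl, ?_⟩
    rw [F.flow_zero x₀ hx₀]
    exact ⟨hx₀U, by simp only [mem_preimage]; exact Metric.mem_ball_self (by positivity)⟩
  have hWopen : IsOpen W := by
    rw [isOpen_iff_mem_nhds]
    rintro z ⟨hzU, hzb⟩
    exact inter_mem (hUopen.mem_nhds hzU)
      ((hfc z (hUD hzU)).preimage_mem_nhds (Metric.isOpen_ball.mem_nhds hzb))
  have hSca : ∀ x ∈ D, ContinuousAt S x := by
    intro x hx
    have h0 : ContinuousAt (fun x' => ‖f x' - f x₀‖) x := ((hfc x hx).sub continuousAt_const).norm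
    have h1 : ContinuousAt (fun x' => 2 * (‖f x' - f x₀‖ + 1) / ε) x :=
      ((h0.add continuousAt_const).const_mul 2).div_const ε
    have h2 : ContinuousAt (fun x' => Real.log (2 * (‖f x' - f x₀‖ + 1) / ε)) x :=
      (Real.continuousAt_log (by positivity)).comp h1
    exact continuousAt_const.max h2
  have hflowca : ∀ (τ : X → ℝ), ∀ x ∈ D, ContinuousAt τ x → 0 ≤ τ x →
      ContinuousAt (fun x' => F.flow x' (τ x')) x := by
    intro τ x hx hτ hτ0
    have hdom : (x, τ x) ∈ F.dom := hglobal x hx (τ x) hτ0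
    have h1 : ContinuousAt (fun x' => (x', τ x')) x := continuousAt_id.prodMk hτ
    have h2 : ContinuousAt (fun p : X × ℝ => F.flow p.1 p.2) (x, τ x) :=
      F.continuousOn.continuousAt (F.isOpen_dom.mem_nhds hdom)
    have h3 : ContinuousAt ((fun p : X × ℝ => F.flow p.1 p.2) ∘ (fun x' => (x', τ x'))) x :=
      ContinuousAt.comp (x := x) h2 h1
    exact h3
  have hAopen : IsOpen A := by
    rw [isOpen_iff_mem_nhds]
    rintro x ⟨hxD, hxW⟩
    have hca := hflowca S x hxD (hSca x hxD) (hS0 x)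
    have h1 : {x' | F.flow x' (S x') ∈ W} ∈ 𝓝 x := hca.preimage_mem_nhds (hWopen.mem_nhds hxW)
    filter_upwards [inter_mem (hDopen.mem_nhds hxD) h1] with x' hx'
    exact ⟨hx'.1, hx'.2⟩
  -- A is relatively closed in D
  have hAclosed : closure A ∩ D ⊆ A := by
    rintro x ⟨hxc, hxD⟩
    set T : ℝ := S x + 1 with hTdef
    have hT0 : (0:ℝ) ≤ T := by linarith [hS0 x]
    set O : Set X := S ⁻¹' (Iio (S x + 1)) with hOdef
    have hO : O ∈ 𝓝 x := (hSca x hxD).preimage_mem_nhds (Iio_mem_nhds (lt_add_one _))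
    have hxc2 : x ∈ closure (A ∩ O) := by
      rw [mem_closure_iff_nhds] at hxc ⊢
      intro V hV
      obtain ⟨w, hw1, hw2⟩ := hxc (V ∩ O) (inter_mem hV hO)
      exact ⟨w, hw1.1, hw2, hw1.2⟩
    have hmapsto : ∀ x' ∈ A ∩ O, F.flow x' T ∈ W := by
      rintro x' ⟨⟨hx'D, hx'W⟩, hx'O⟩
      exact hWmem x' hx'D T hT0 (hS' x' T (le_of_lt hx'O)) ⟨S x', hS0 x', hx'W⟩
    have hca : ContinuousAt (fun x' => F.flow x' T) x :=
      hflowca (fun _ => T) x hxD continuousAt_const hT0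
    have hclW : F.flow x T ∈ closure W := by
      have h1 := hca.continuousWithinAt.mem_closure_image hxc2
      refine closure_mono ?_ h1
      rintro _ ⟨x', hx', rfl⟩
      exact hmapsto x' hx'
    have hdomT : (x, T) ∈ F.dom := hglobal x hxD T hT0
    set z := F.flow x T with hz
    have hzD : z ∈ D := F.mem_of_dom _ hdomT
    have hfzb : dist (f z) (f x₀) < ε / 2 := by
      have hfz : f z = f x₀ + Real.exp (-T) • (f x - f x₀) := F.lifts _ hdomT
      rw [hfz, dist_eq_norm, add_sub_cancel_left, norm_smul, Real.norm_eq_abs,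
        abs_of_pos (Real.exp_pos _)]
      exact hS' x T (by linarith)
    have hzW : z ∈ W := by
      have hne : (𝓝[W] z).NeBot := mem_closure_iff_nhdsWithin_neBot.mp hclW
      have hfzU : f z ∈ f '' U := hball (Metric.ball_subset_ball (by linarith)
        (Metric.mem_ball.mpr hfzb))
      have h1 : Tendsto f (𝓝[W] z) (𝓝[f '' U] (f z)) := by
        apply (hfc z hzD).continuousWithinAt.tendsto_nhdsWithin
        rintro w ⟨hwU, _⟩
        exact ⟨w, hwU, rfl⟩
      have h2 : Tendsto g (𝓝[f '' U] (f z)) (𝓝 (g (f z))) := hgc (f z) hfzU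
      have h3 : Tendsto (fun w => g (f w)) (𝓝[W] z) (𝓝 (g (f z))) := h2.comp h1
      have h4 : Tendsto (fun w => w) (𝓝[W] z) (𝓝 (g (f z))) := by
        refine h3.congr' ?_
        filter_upwards [eventually_mem_nhdsWithin] with w hw
        exact hgf w hw.1
      have h5 : Tendsto (fun w : X => w) (𝓝[W] z) (𝓝 z) :=
        tendsto_id.mono_left nhdsWithin_le_nhds
      have hzeq : g (f z) = z := tendsto_nhds_unique h4 h5
      rw [← hzeq]
      exact hgW (f z) (Metric.mem_ball.mpr hfzb)
    exact hentry x hxD ⟨T, hT0, hzW⟩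
  -- by connectedness, A = D
  have hDA : D ⊆ A := by
    apply hDconn.isPreconnected.subset_left_of_subset_union hAopen
      isClosed_closure.isOpen_compl (disjoint_compl_right.mono_left subset_closure) ?_
      ⟨x₀, hx₀, hx₀A⟩
    intro x hx
    by_cases hxa : x ∈ closure A
    · exact Or.inl (hAclosed ⟨hxa, hx⟩)
    · exact Or.inr hxa
  constructor
  · -- injectivity
    intro x₁ h₁ x₂ h₂ hfeq
    obtain ⟨-, hW₁⟩ := hDA h₁
    obtain ⟨-, hW₂⟩ := hDA h₂
    set u := max (S x₁) (S x₂) with hu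
    have hu0 : (0:ℝ) ≤ u := le_trans (hS0 x₁) (le_max_left _ _)
    have e₁ := chart x₁ h₁ (S x₁) (hS0 x₁) hW₁ u hu0
      (by linarith [hS' x₁ u (le_max_left _ _)])
    have e₂ := chart x₂ h₂ (S x₂) (hS0 x₂) hW₂ u hu0
      (by linarith [hS' x₂ u (le_max_right _ _)])
    have he : F.flow x₁ u = F.flow x₂ u := by rw [e₁, e₂, hfeq]
    have b₁ := F.flow_add x₁ u (-u) (hglobal x₁ h₁ u hu0)
      (by rw [add_neg_cancel]; exact F.zero_mem x₁ h₁)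
    have b₂ := F.flow_add x₂ u (-u) (hglobal x₂ h₂ u hu0)
      (by rw [add_neg_cancel]; exact F.zero_mem x₂ h₂)
    have hx1 : x₁ = F.flow (F.flow x₁ u) (-u) := by
      rw [b₁.2, add_neg_cancel, F.flow_zero x₁ h₁]
    rw [hx1, he, b₂.2, add_neg_cancel, F.flow_zero x₂ h₂]
  · -- star-shapedness
    rintro y ⟨x, hxD, rfl⟩ s ⟨hs0, hs1⟩
    rcases eq_or_lt_of_le hs0 with h | h
    · refine ⟨x₀, hx₀, ?_⟩
      rw [← h]
      simp
    · have ht0 : 0 ≤ -Real.log s := by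
        have := Real.log_nonpos (le_of_lt h) hs1
        linarith
      have hdom := hglobal x hxD (-Real.log s) ht0
      refine ⟨F.flow x (-Real.log s), F.mem_of_dom _ hdom, ?_⟩
      rw [F.lifts _ hdom]
      simp only
      rw [neg_neg, Real.exp_log h]
end
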